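/- arXiv:2302.02220 — 2 statements merged into one kernel-verified Lean document; each statement's English description precedes it below -/
import Mathlib

section
/- Assume (H2), (H3), (H5), (H6), and let p ≥ 1 with k > 1 the gain in (H5). Then for every open subset Ω₀ with Ω₀ ⋐ Ω there exists C > 0 such that (∫_{Ω₀} |u|^{kp} dν)^{1/(kp)} ≤ C [ (∫_Ω |u|^p dν)^{1/p} + (∫_Ω |√Q ∇u|^p dμ)^{1/p} ] for every u ∈ Lip_loc(Ω). -/
open MeasureTheory Metric Set Filter Topology Matrix
open scoped ENNReal NNReal BigOperators

noncomputable section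

/-- `ℝⁿ` with its Euclidean structure. -/
abbrev Euc (n : ℕ) := EuclideanSpace ℝ (Fin n)

variable {n : ℕ}

/-- The `ρ`-metric ball `B(x,r) = {y ∈ Ω | ρ x y < r}` inside `Ω`. -/
def MBall (ρ : Euc n → Euc n → ℝ) (Ω : Set (Euc n)) (x : Euc n) (r : ℝ) : Set (Euc n) :=
  {y ∈ Ω | ρ x y < r}

/-- `ρ` is a metric on `Ω` that generates a topology equivalent to the Euclidean one. -/
structure IsMetricOn (ρ : Euc n → Euc n → ℝ) (Ω : Set (Euc n)) : Prop where
  nonneg : ∀ x ∈ Ω, ∀ y ∈ Ω, 0 ≤ ρ x y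
  refl : ∀ x ∈ Ω, ρ x x = 0
  eq_of_eq_zero : ∀ x ∈ Ω, ∀ y ∈ Ω, ρ x y = 0 → x = y
  symm : ∀ x ∈ Ω, ∀ y ∈ Ω, ρ x y = ρ y x
  triangle : ∀ x ∈ Ω, ∀ y ∈ Ω, ∀ z ∈ Ω, ρ x z ≤ ρ x y + ρ y z
  equiv₁ : ∀ x ∈ Ω, ∀ ε > (0:ℝ), ∃ δ > (0:ℝ), ∀ y ∈ Ω, ρ x y < δ → dist y x < ε
  equiv₂ : ∀ x ∈ Ω, ∀ ε > (0:ℝ), ∃ δ > (0:ℝ), ∀ y ∈ Ω, dist y x < δ → ρ x y < ε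

/-- (H1) Segment property. -/
def SegmentProperty (ρ : Euc n → Euc n → ℝ) (Ω : Set (Euc n)) : Prop :=
  ∀ x ∈ Ω, ∀ y ∈ Ω, ∃ (a b : ℝ) (γ : ℝ → Euc n), a ≤ b ∧
    ContinuousOn γ (Icc a b) ∧ (∀ t ∈ Icc a b, γ t ∈ Ω) ∧
    γ a = x ∧ γ b = y ∧
    ∀ s ∈ Icc a b, ∀ t ∈ Icc a b, ρ (γ s) (γ t) = |s - t|

/-- Euclidean norm of a plain vector in `Fin n → ℝ`. -/
def vnorm (w : Fin n → ℝ) : ℝ := Real.sqrt (∑ i, (w i) ^ 2)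

/-- The (a.e.-defined) gradient of `u`, as a plain vector. -/
def grad (u : Euc n → ℝ) (x : Euc n) : Fin n → ℝ :=
  fun i => fderiv ℝ u x (EuclideanSpace.single i (1:ℝ))

/-- `u ∈ Lip_loc(Ω)`. -/
def LipLocOn (u : Euc n → ℝ) (Ω : Set (Euc n)) : Prop :=
  ∀ x ∈ Ω, ∃ (K : NNReal) (t : Set (Euc n)), t ∈ 𝓝 x ∧ LipschitzOnWith K u t

/-- `u ∈ Lip(A)`. -/
def LipOn (u : Euc n → ℝ) (A : Set (Euc n)) : Prop :=
  ∃ K : NNReal, LipschitzOnWith K u A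

/-- `u ∈ Lip₀(A)`: Lipschitz with compact support contained in `A`. -/
def Lip0 (u : Euc n → ℝ) (A : Set (Euc n)) : Prop :=
  (∃ K : NNReal, LipschitzWith K u) ∧ HasCompactSupport u ∧ tsupport u ⊆ A

/-- Operator "norm" `sup_{|ξ|=1} ⟨ξ, A ξ⟩` of a (nonnegative symmetric) matrix. -/
def qOpNorm (A : Matrix (Fin n) (Fin n) ℝ) : ℝ :=
  sSup {t : ℝ | ∃ ξ : Fin n → ℝ, vnorm ξ = 1 ∧ t = ∑ i, ξ i * A.mulVec ξ i}

/-- `v(x) = ‖Q(x)‖_op^{p/2}`. -/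
def vQ (p : ℝ) (Qm : Euc n → Matrix (Fin n) (Fin n) ℝ) (x : Euc n) : ℝ :=
  qOpNorm (Qm x) ^ (p/2)

/-- Convergence in `L^p(S, dω)`. -/
def TendstoLp (p : ℝ) (S : Set (Euc n)) (ω : Measure (Euc n))
    (F : ℕ → Euc n → ℝ) (f : Euc n → ℝ) : Prop :=
  Tendsto (fun j => ∫ x in S, |F j x - f x| ^ p ∂ω) atTop (𝓝 0)

/-- Convergence in `(L^p(S, dω))ⁿ`. -/
def TendstoLpV (p : ℝ) (S : Set (Euc n)) (ω : Measure (Euc n))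
    (F : ℕ → Euc n → Fin n → ℝ) (f : Euc n → Fin n → ℝ) : Prop :=
  Tendsto (fun j => ∫ x in S, (vnorm (fun i => F j x i - f x i)) ^ p ∂ω) atTop (𝓝 0)

/-- Pointwise `ω`-a.e. convergence on `S`. -/
def TendstoAE (S : Set (Euc n)) (ω : Measure (Euc n))
    (F : ℕ → Euc n → ℝ) (f : Euc n → ℝ) : Prop :=
  ∀ᵐ x ∂(ω.restrict S), Tendsto (fun j => F j x) atTop (𝓝 (f x))

/-- Pointwise `ω`-a.e. convergence on `S`, vector-valued. -/
def TendstoAEV (S : Set (Euc n)) (ω : Measure (Euc n))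
    (F : ℕ → Euc n → Fin n → ℝ) (f : Euc n → Fin n → ℝ) : Prop :=
  ∀ᵐ x ∂(ω.restrict S), Tendsto (fun j => F j x) atTop (𝓝 (f x))

/-- A measure is doubling (with constant `A`) on metric balls `B` with `2B ⋐ Ω`. -/
def DoublingOn (ρ : Euc n → Euc n → ℝ) (Ω : Set (Euc n)) (ω : Measure (Euc n))
    (A : ℝ≥0∞) : Prop :=
  ∀ (x : Euc n) (r : ℝ), 0 < r → closure (MBall ρ Ω x (2*r)) ⊆ Ω →
    ω (MBall ρ Ω x (2*r)) ≤ A * ω (MBall ρ Ω x r)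

/-- A measure is reverse-doubling of order 1 (with constant `C`). -/
def RevDoublingOn (ρ : Euc n → Euc n → ℝ) (Ω : Set (Euc n)) (ω : Measure (Euc n))
    (C : ℝ) : Prop :=
  ∀ (x x' : Euc n) (r r' : ℝ), 0 < r' → r' ≤ r →
    MBall ρ Ω x' r' ⊆ MBall ρ Ω x r → closure (MBall ρ Ω x r) ⊆ Ω →
    ENNReal.ofReal (C * (r / r')) * ω (MBall ρ Ω x' r') ≤ ω (MBall ρ Ω x r)

/-- (H4) Local Poincaré inequality. -/
def H4Poincare (ρ : Euc n → Euc n → ℝ) (Ω : Set (Euc n)) (μ ν : Measure (Euc n))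
    (sQ : Euc n → Matrix (Fin n) (Fin n) ℝ) (C₀ : ℝ) : Prop :=
  ∀ (x : Euc n) (r : ℝ), 0 < r → closure (MBall ρ Ω x r) ⊆ Ω →
    ∀ u : Euc n → ℝ, LipLocOn u Ω →
      (ν (MBall ρ Ω x r)).toReal⁻¹ *
        ∫ y in MBall ρ Ω x r,
          |u y - (ν (MBall ρ Ω x r)).toReal⁻¹ * ∫ z in MBall ρ Ω x r, u z ∂ν| ∂ν
      ≤ C₀ * r * ((μ (MBall ρ Ω x r)).toReal⁻¹ *
          ∫ y in MBall ρ Ω x r, vnorm ((sQ y).mulVec (grad u y)) ∂μ)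

/-- (H5) Local Sobolev inequality with gain `k`. -/
def H5Sobolev (ρ : Euc n → Euc n → ℝ) (Ω : Set (Euc n)) (μ ν : Measure (Euc n))
    (sQ : Euc n → Matrix (Fin n) (Fin n) ℝ) (p k C₁ : ℝ) : Prop :=
  ∀ (x : Euc n) (r : ℝ), 0 < r → closure (MBall ρ Ω x r) ⊆ Ω →
    ∀ u : Euc n → ℝ, Lip0 u (MBall ρ Ω x r) →
      ((ν (MBall ρ Ω x r)).toReal⁻¹ * ∫ y in MBall ρ Ω x r, |u y| ^ (k*p) ∂ν) ^ (1/(k*p))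
      ≤ C₁ * r * ((μ (MBall ρ Ω x r)).toReal⁻¹ *
          ∫ y in MBall ρ Ω x r, vnorm ((sQ y).mulVec (grad u y)) ^ p ∂μ) ^ (1/p)

/-- (H6) Accumulating sequences of Lipschitz cut-off functions. -/
def H6Cutoff (ρ : Euc n → Euc n → ℝ) (Ω : Set (Euc n))
    (Qm sQ : Euc n → Matrix (Fin n) (Fin n) ℝ) (p γ Ct T τ : ℝ) : Prop :=
  ∀ (x : Euc n) (r : ℝ), 0 < r → closure (MBall ρ Ω x r) ⊆ Ω →
    ∃ φ : ℕ → Euc n → ℝ,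
      ∀ j : ℕ, Lip0 (φ j) (MBall ρ Ω x r) ∧
        (∀ y, 0 ≤ φ j y ∧ φ j y ≤ 1) ∧
        (∀ y ∈ MBall ρ Ω x (τ*r), φ j y = 1) ∧
        tsupport (φ (j+1)) ⊆ {y | φ j y = 1} ∧
        ∀ᵐ y ∂(volume : Measure (Euc n)),
          vnorm ((sQ y).mulVec (grad (φ j) y)) ≤ (Ct * T ^ j / r ^ γ) * vQ p Qm y ^ (1/p)

/-- The kernel `R(x,y) = ρ(x,y) / μ(B(x,ρ(x,y)))`. -/
def Rker (ρ : Euc n → Euc n → ℝ) (Ω : Set (Euc n)) (μ : Measure (Euc n))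
    (x y : Euc n) : ℝ :=
  ρ x y / (μ (MBall ρ Ω x (ρ x y))).toReal

/-- The Stummel–Kato modulus `Φ_V(r)`. -/
def PhiV (ρ : Euc n → Euc n → ℝ) (Ω : Set (Euc n)) (μ ν : Measure (Euc n))
    (V : Euc n → ℝ) (p r : ℝ) : ℝ≥0∞ :=
  ⨆ x ∈ Ω,
    (∫⁻ y in MBall ρ Ω x r, ENNReal.ofReal (Rker ρ Ω μ x y) *
      (∫⁻ z in MBall ρ Ω x r, ENNReal.ofReal (|V z| * Rker ρ Ω μ z y) ∂ν) ^ (1/(p-1)) ∂μ) ^ (p-1)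

/-- `V ∈ M̃_p(Ω)`. -/
def MemMtilde (ρ : Euc n → Euc n → ℝ) (Ω : Set (Euc n)) (μ ν : Measure (Euc n))
    (V : Euc n → ℝ) (p : ℝ) : Prop :=
  ∀ r : ℝ, 0 < r → PhiV ρ Ω μ ν V p r < ⊤

/-- `V ∈ M_p(Ω)`. -/
def MemMp (ρ : Euc n → Euc n → ℝ) (Ω : Set (Euc n)) (μ ν : Measure (Euc n))
    (V : Euc n → ℝ) (p : ℝ) : Prop :=
  MemMtilde ρ Ω μ ν V p ∧
    Tendsto (fun r => PhiV ρ Ω μ ν V p r) (𝓝[>] (0:ℝ)) (𝓝 0)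

/-- `V ∈ M'_p(Ω)`. -/
def MemMp' (ρ : Euc n → Euc n → ℝ) (Ω : Set (Euc n)) (μ ν : Measure (Euc n))
    (V : Euc n → ℝ) (p : ℝ) : Prop :=
  MemMp ρ Ω μ ν V p ∧ ∃ ρ₀ > (0:ℝ),
    IntegrableOn (fun r => (PhiV ρ Ω μ ν V p r).toReal ^ (1/(p-1)) / r) (Ioc 0 ρ₀) volume

/-- The subrepresentation inequality (with constant `C`). -/
def Subrep (ρ : Euc n → Euc n → ℝ) (Ω : Set (Euc n)) (μ ν : Measure (Euc n))
    (sQ : Euc n → Matrix (Fin n) (Fin n) ℝ) (C : ℝ) : Prop :=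
  ∀ (x₀ : Euc n) (r : ℝ), 0 < r → closure (MBall ρ Ω x₀ r) ⊆ Ω →
    ∀ u : Euc n → ℝ, LipOn u (MBall ρ Ω x₀ r) →
      ∀ᵐ x ∂(ν.restrict (MBall ρ Ω x₀ r)),
        |u x - (ν (MBall ρ Ω x₀ r)).toReal⁻¹ * ∫ y in MBall ρ Ω x₀ r, u y ∂ν|
          ≤ C * ∫ y in MBall ρ Ω x₀ r, Rker ρ Ω μ x y * vnorm ((sQ y).mulVec (grad u y)) ∂μ

/-- `(u,g)` is a weak solution of `-div(h |√Q ∇u|^{p-2} Q ∇u) = m |f|^{p-2} f` on `Ω`. -/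
def WeakSol (Ω : Set (Euc n)) (μ ν : Measure (Euc n))
    (Qm sQ : Euc n → Matrix (Fin n) (Fin n) ℝ) (h m f : Euc n → ℝ) (p : ℝ)
    (u : Euc n → ℝ) (g : Euc n → Fin n → ℝ) : Prop :=
  (∫⁻ x in Ω, ENNReal.ofReal (|u x| ^ p) ∂ν) < ⊤ ∧
  (∫⁻ x in Ω, ENNReal.ofReal (vnorm ((sQ x).mulVec (g x)) ^ p) ∂μ) < ⊤ ∧
  (∃ uj : ℕ → Euc n → ℝ, (∀ j, LipLocOn (uj j) Ω) ∧ TendstoLp p Ω ν uj u ∧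
     TendstoLpV p Ω μ (fun j x => (sQ x).mulVec (grad (uj j) x))
       (fun x => (sQ x).mulVec (g x))) ∧
  ∀ φ : Euc n → ℝ, Lip0 φ Ω →
    (∫ x in Ω, vnorm ((sQ x).mulVec (g x)) ^ (p-2) *
        (∑ i, grad φ x i * (Qm x).mulVec (g x) i) * h x) +
    (∫ x in Ω, |f x| ^ (p-2) * f x * φ x * m x) = 0



section Helpers

-- helpers

lemma vnorm_eq (w : Fin n → ℝ) :
    vnorm w = ‖((WithLp.equiv 2 (Fin n → ℝ)).symm w : EuclideanSpace ℝ (Fin n))‖ := by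
  rw [EuclideanSpace.norm_eq]
  simp [vnorm, Real.norm_eq_abs, sq_abs]

lemma vnorm_nonneg (w : Fin n → ℝ) : 0 ≤ vnorm w := Real.sqrt_nonneg _

lemma vnorm_add_le (a b : Fin n → ℝ) : vnorm (a + b) ≤ vnorm a + vnorm b := by
  simp only [vnorm_eq]
  rw [show (WithLp.equiv 2 (Fin n → ℝ)).symm (a + b)
      = (WithLp.equiv 2 (Fin n → ℝ)).symm a + (WithLp.equiv 2 (Fin n → ℝ)).symm b from rfl]
  exact norm_add_le _ _

lemma vnorm_smul (c : ℝ) (a : Fin n → ℝ) : vnorm (c • a) = |c| * vnorm a := by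
  simp only [vnorm_eq]
  rw [show (WithLp.equiv 2 (Fin n → ℝ)).symm (c • a)
      = c • (WithLp.equiv 2 (Fin n → ℝ)).symm a from rfl]
  rw [norm_smul, Real.norm_eq_abs]

lemma qOpNorm_nonneg {A : Matrix (Fin n) (Fin n) ℝ} (hA : A.PosSemidef) : 0 ≤ qOpNorm A := by
  apply Real.sSup_nonneg
  rintro t ⟨ξ, -, rfl⟩
  have := hA.dotProduct_mulVec_nonneg ξ
  simpa [dotProduct] using this

lemma vQ_nonneg {p : ℝ} {Qm : Euc n → Matrix (Fin n) (Fin n) ℝ} {x : Euc n}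
    (hA : (Qm x).PosSemidef) : 0 ≤ vQ p Qm x :=
  Real.rpow_nonneg (qOpNorm_nonneg hA) _

lemma mball_subset_omega (ρ : Euc n → Euc n → ℝ) (Ω : Set (Euc n)) (x : Euc n) (r : ℝ) :
    MBall ρ Ω x r ⊆ Ω := fun _ h => h.1

lemma mball_isOpen {ρ : Euc n → Euc n → ℝ} {Ω : Set (Euc n)} (hΩ : IsOpen Ω)
    (hmet : IsMetricOn ρ Ω) (x : Euc n) {r : ℝ} (hx : x ∈ Ω) :
    IsOpen (MBall ρ Ω x r) := by
  rw [Metric.isOpen_iff]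
  rintro y ⟨hyΩ, hyr⟩
  obtain ⟨ε₁, hε₁, hball⟩ := Metric.isOpen_iff.1 hΩ y hyΩ
  obtain ⟨δ, hδ, hδprop⟩ := hmet.equiv₂ y hyΩ (r - ρ x y) (by linarith)
  refine ⟨min δ ε₁, by positivity, fun z hz => ?_⟩
  have hz' : dist z y < δ := lt_of_lt_of_le hz (min_le_left _ _)
  have hzΩ : z ∈ Ω := hball (Metric.mem_ball.2 (lt_of_lt_of_le hz (min_le_right _ _)))
  have hρyz : ρ y z < r - ρ x y := hδprop z hzΩ hz'
  exact ⟨hzΩ, lt_of_le_of_lt (hmet.triangle x hx y hyΩ z hzΩ) (by linarith)⟩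

lemma mball_mem_self {ρ : Euc n → Euc n → ℝ} {Ω : Set (Euc n)}
    (hmet : IsMetricOn ρ Ω) {x : Euc n} (hx : x ∈ Ω) {r : ℝ} (hr : 0 < r) :
    x ∈ MBall ρ Ω x r := ⟨hx, by rw [hmet.refl x hx]; exact hr⟩

/-- Existence of a small ball with closure inside `Ω`. -/
lemma exists_good_radius {ρ : Euc n → Euc n → ℝ} {Ω : Set (Euc n)} (hΩ : IsOpen Ω)
    (hmet : IsMetricOn ρ Ω) {x : Euc n} (hx : x ∈ Ω) :
    ∃ r > (0:ℝ), closure (MBall ρ Ω x r) ⊆ Ω := by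
  obtain ⟨ε, hε, hball⟩ := Metric.isOpen_iff.1 hΩ x hx
  obtain ⟨δ, hδ, hδprop⟩ := hmet.equiv₁ x hx (ε/2) (by positivity)
  refine ⟨δ, hδ, ?_⟩
  have h1 : MBall ρ Ω x δ ⊆ Metric.ball x (ε/2) := by
    rintro y ⟨hyΩ, hyδ⟩
    exact hδprop y hyΩ hyδ
  calc closure (MBall ρ Ω x δ) ⊆ closure (Metric.ball x (ε/2)) := closure_mono h1
    _ ⊆ Metric.closedBall x (ε/2) := Metric.closure_ball_subset_closedBall
    _ ⊆ Metric.ball x ε := Metric.closedBall_subset_ball (by linarith)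
    _ ⊆ Ω := hball

lemma LipLocOn.continuousOn {u : Euc n → ℝ} {Ω : Set (Euc n)} (hu : LipLocOn u Ω)
    (hΩ : IsOpen Ω) : ContinuousOn u Ω := by
  intro x hx
  obtain ⟨K, t, ht, hlip⟩ := hu x hx
  exact ((hlip.continuousOn).continuousAt ht).continuousWithinAt

/-- A locally Lipschitz function is Lipschitz on compact subsets. -/
lemma LipLocOn.lipschitzOnWith_isCompact {u : Euc n → ℝ} {Ω : Set (Euc n)}
    (hu : LipLocOn u Ω) (hΩ : IsOpen Ω) {S : Set (Euc n)} (hS : IsCompact S)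
    (hSΩ : S ⊆ Ω) : ∃ K : ℝ≥0, LipschitzOnWith K u S := by
  rcases S.eq_empty_or_nonempty with rfl | hne
  · exact ⟨1, by simp [LipschitzOnWith]⟩
  -- choose radii
  have hchoice : ∀ x : S, ∃ (K : NNReal) (ε : ℝ), 0 < ε ∧
      LipschitzOnWith K u (Metric.ball (x : Euc n) ε) := by
    rintro ⟨x, hxS⟩
    obtain ⟨K, t, ht, hlip⟩ := hu x (hSΩ hxS)
    obtain ⟨ε, hε, hball⟩ := Metric.mem_nhds_iff.1 ht
    exact ⟨K, ε, hε, hlip.mono hball⟩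
  choose K ε hεpos hlip using hchoice
  have hcover : S ⊆ ⋃ x : S, Metric.ball (x : Euc n) (ε x / 2) := by
    intro y hy
    refine Set.mem_iUnion.2 ⟨⟨y, hy⟩, Metric.mem_ball.2 ?_⟩
    simp only [dist_self]
    have := hεpos ⟨y, hy⟩; positivity
  obtain ⟨t, ht⟩ := hS.elim_finite_subcover (fun x : S => Metric.ball (x : Euc n) (ε x / 2))
    (fun _ => Metric.isOpen_ball) hcover
  have htne : t.Nonempty := by
    obtain ⟨y, hy⟩ := hne
    obtain ⟨i, hit, hyi⟩ := Set.mem_iUnion₂.1 (ht hy)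
    exact ⟨i, hit⟩
  -- min radius and max constant
  set ε₀ : ℝ := t.inf' htne (fun i => ε i / 2) with hε₀def
  have hε₀pos : 0 < ε₀ := by
    rw [hε₀def, Finset.lt_inf'_iff]
    exact fun i _ => by have := hεpos i; positivity
  set K₀ : ℝ≥0 := t.sup (fun i => K i)
  obtain ⟨M, hM⟩ := hS.exists_bound_of_continuousOn ((hu.continuousOn hΩ).mono hSΩ)
  have hM0 : 0 ≤ M := le_trans (norm_nonneg _) (hM _ hne.choose_spec)
  set Kr : ℝ := max (K₀ : ℝ) (2 * M / ε₀)
  refine ⟨Real.toNNReal Kr, LipschitzOnWith.of_dist_le_mul fun x hx y hy => ?_⟩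
  have hKr0 : 0 ≤ Kr := le_trans (by positivity) (le_max_right _ _)
  rw [Real.coe_toNNReal _ hKr0]
  rcases lt_or_ge (dist x y) ε₀ with hcase | hcase
  · -- close: common Lipschitz ball
    obtain ⟨i, hit, hxi⟩ := Set.mem_iUnion₂.1 (ht hx)
    have hxball : x ∈ Metric.ball (i : Euc n) (ε i) := by
      rw [Metric.mem_ball] at hxi ⊢
      have : ε i / 2 < ε i := by have := hεpos i; linarith
      linarith
    have hyball : y ∈ Metric.ball (i : Euc n) (ε i) := by
      rw [Metric.mem_ball] at hxi ⊢
      have hε₀le : ε₀ ≤ ε i / 2 := Finset.inf'_le _ hit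
      have : dist y (i : Euc n) ≤ dist y x + dist x (i:Euc n) := dist_triangle _ _ _
      rw [dist_comm] at hcase
      linarith
    have := (hlip i).dist_le_mul x hxball y hyball
    refine le_trans this (mul_le_mul_of_nonneg_right ?_ dist_nonneg)
    exact le_trans (by exact_mod_cast NNReal.coe_le_coe.2 (Finset.le_sup hit)) (le_max_left _ _)
  · -- far: use bound
    have h1 : dist (u x) (u y) ≤ 2 * M := by
      rw [Real.dist_eq]
      have := hM x hx; have := hM y hy
      rw [Real.norm_eq_abs] at *
      have := abs_sub_abs_le_abs_sub (u x) (u y)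
      have habs : |u x - u y| ≤ |u x| + |u y| := abs_sub _ _
      linarith
    calc dist (u x) (u y) ≤ 2 * M := h1
      _ = (2 * M / ε₀) * ε₀ := by field_simp
      _ ≤ (2 * M / ε₀) * dist x y := by
          apply mul_le_mul_of_nonneg_left hcase; positivity
      _ ≤ Kr * dist x y := mul_le_mul_of_nonneg_right (le_max_right _ _) dist_nonneg
/-- The product of a locally Lipschitz function with a compactly supported Lipschitz
cut-off is globally Lipschitz and bounded. -/
lemma lip_mul_cutoff {u φ : Euc n → ℝ} {Ω A : Set (Euc n)} (hΩ : IsOpen Ω)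
    (hu : LipLocOn u Ω) (hφ : Lip0 φ A) (hφ01 : ∀ y, 0 ≤ φ y ∧ φ y ≤ 1)
    (hSΩ : tsupport φ ⊆ Ω) :
    ∃ (K : ℝ≥0) (M : ℝ), 0 ≤ M ∧ LipschitzWith K (fun y => u y * φ y) ∧
      (∀ x, |u x * φ x| ≤ M) ∧ Lip0 (fun y => u y * φ y) A := by
  obtain ⟨⟨Kφ, hKφ⟩, hcs, hsupp⟩ := hφ
  set S : Set (Euc n) := tsupport φ with hSdef
  have hScomp : IsCompact S := hcs
  obtain ⟨δ, hδ, hthick⟩ := hScomp.exists_thickening_subset_open hΩ hSΩ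
  set N : Set (Euc n) := Metric.cthickening (δ/2) S with hNdef
  have hNcomp : IsCompact N := hScomp.cthickening
  have hNΩ : N ⊆ Ω := le_trans (Metric.cthickening_subset_thickening' hδ (by linarith) S) hthick
  have hSN : S ⊆ N := Metric.self_subset_cthickening S
  obtain ⟨Ku, hKu⟩ := hu.lipschitzOnWith_isCompact hΩ hNcomp hNΩ
  obtain ⟨M₀, hM₀⟩ := hNcomp.exists_bound_of_continuousOn ((hu.continuousOn hΩ).mono hNΩ)
  set M : ℝ := max M₀ 0 with hMdef
  have hM : ∀ x ∈ N, |u x| ≤ M := fun x hx =>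
    le_trans (by simpa [Real.norm_eq_abs] using hM₀ x hx) (le_max_left _ _)
  have hM0 : 0 ≤ M := le_max_right _ _
  set w : Euc n → ℝ := fun y => u y * φ y with hwdef
  have hwbound : ∀ x, |w x| ≤ M := by
    intro x
    by_cases hx : x ∈ S
    · calc |w x| = |u x| * |φ x| := abs_mul _ _
        _ ≤ M * 1 := mul_le_mul (hM x (hSN hx)) (abs_le.2 ⟨by linarith [(hφ01 x).1], (hφ01 x).2⟩)
            (abs_nonneg _) hM0
        _ = M := mul_one M
    · have : φ x = 0 := image_eq_zero_of_notMem_tsupport hx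
      simp [hwdef, this, hM0]
  set Kr : ℝ := M * Kφ + Ku + 4 * M / δ with hKrdef
  have hKr0 : 0 ≤ Kr := by positivity
  have key : ∀ x y, x ∈ S → |w x - w y| ≤ Kr * dist x y := by
    intro x y hxS
    by_cases hcase : dist x y ≤ δ/2
    · have hyN : y ∈ N := Metric.mem_cthickening_of_dist_le y x (δ/2) S hxS
        (by rwa [dist_comm])
      have hxN : x ∈ N := hSN hxS
      have h1 : w x - w y = u x * (φ x - φ y) + φ y * (u x - u y) := by ring
      have h2 : |φ x - φ y| ≤ (Kφ : ℝ) * dist x y := by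
        have := hKφ.dist_le_mul x y
        rwa [Real.dist_eq] at this
      have h3 : |u x - u y| ≤ (Ku : ℝ) * dist x y := by
        have := hKu.dist_le_mul x hxN y hyN
        rwa [Real.dist_eq] at this
      calc |w x - w y| ≤ |u x * (φ x - φ y)| + |φ y * (u x - u y)| := by
            rw [h1]; exact abs_add_le _ _
        _ = |u x| * |φ x - φ y| + |φ y| * |u x - u y| := by rw [abs_mul, abs_mul]
        _ ≤ M * ((Kφ : ℝ) * dist x y) + 1 * ((Ku : ℝ) * dist x y) := by
            gcongr
            · exact hM x hxN
            · exact abs_le.2 ⟨by linarith [(hφ01 y).1], (hφ01 y).2⟩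
        _ = (M * Kφ + Ku) * dist x y := by ring
        _ ≤ Kr * dist x y := by
            apply mul_le_mul_of_nonneg_right _ dist_nonneg
            rw [hKrdef]
            have : 0 ≤ 4 * M / δ := by positivity
            linarith
    · push_neg at hcase
      calc |w x - w y| ≤ |w x| + |w y| := abs_sub _ _
        _ ≤ M + M := add_le_add (hwbound x) (hwbound y)
        _ = (4 * M / δ) * (δ / 2) := by field_simp; ring
        _ ≤ (4 * M / δ) * dist x y := by
            apply mul_le_mul_of_nonneg_left hcase.le; positivity
        _ ≤ Kr * dist x y := by
            apply mul_le_mul_of_nonneg_right _ dist_nonneg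
            rw [hKrdef]
            have h4 : (0:ℝ) ≤ M * Kφ := by positivity
            have h5 : (0:ℝ) ≤ (Ku:ℝ) := Ku.coe_nonneg
            linarith
  have hwlip : LipschitzWith (Real.toNNReal Kr) w := by
    apply LipschitzWith.of_dist_le_mul
    intro x y
    rw [Real.coe_toNNReal _ hKr0, Real.dist_eq]
    by_cases hx : x ∈ S
    · exact key x y hx
    by_cases hy : y ∈ S
    · rw [abs_sub_comm, dist_comm]; exact key y x hy
    · have h1 : φ x = 0 := image_eq_zero_of_notMem_tsupport hx
      have h2 : φ y = 0 := image_eq_zero_of_notMem_tsupport hy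
      simp [hwdef, h1, h2]
      positivity
  have hsuppw : tsupport w ⊆ tsupport φ := by
    apply closure_mono
    intro x hx
    simp only [Function.mem_support, hwdef] at hx ⊢
    intro h0
    exact hx (by simp [h0])
  refine ⟨Real.toNNReal Kr, M, hM0, hwlip, hwbound,
    ⟨Real.toNNReal Kr, hwlip⟩, ?_, le_trans hsuppw hsupp⟩
  exact hcs.of_isClosed_subset isClosed_closure hsuppw
lemma cont_abs_rpow {c : ℝ} (hc : 0 < c) : Continuous fun t : ℝ => |t| ^ c := by
  rw [continuous_iff_continuousAt]
  intro t
  exact (Real.continuousAt_rpow_const _ _ (Or.inr hc.le)).comp continuous_abs.continuousAt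

lemma grad_mul {u φ : Euc n → ℝ} {x : Euc n} (hu : DifferentiableAt ℝ u x)
    (hφ : DifferentiableAt ℝ φ x) :
    grad (fun y => u y * φ y) x = u x • grad φ x + φ x • grad u x := by
  funext i
  have h := fderiv_fun_mul hu hφ
  simp only [grad, h, ContinuousLinearMap.add_apply, ContinuousLinearMap.coe_smul',
    Pi.add_apply, Pi.smul_apply, smul_eq_mul]

lemma vnorm_mulVec_combo (M : Matrix (Fin n) (Fin n) ℝ) (a b : Fin n → ℝ) (c d : ℝ) :
    vnorm (M.mulVec (c • a + d • b)) ≤ |c| * vnorm (M.mulVec a) + |d| * vnorm (M.mulVec b) := by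
  rw [Matrix.mulVec_add, Matrix.mulVec_smul, Matrix.mulVec_smul]
  exact le_trans (vnorm_add_le _ _) (by rw [vnorm_smul, vnorm_smul])

lemma ennreal_add_rpow_le (a b : ℝ≥0∞) {q : ℝ} (hq : 0 ≤ q) :
    (a + b) ^ q ≤ 2 ^ q * (a ^ q + b ^ q) := by
  have h1 : a + b ≤ 2 * (a ⊔ b) := by
    rw [two_mul]; exact add_le_add le_sup_left le_sup_right
  calc (a+b)^q ≤ (2 * (a ⊔ b))^q := ENNReal.rpow_le_rpow h1 hq
    _ = 2^q * (a ⊔ b)^q := ENNReal.mul_rpow_of_nonneg _ _ hq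
    _ ≤ 2^q * (a^q + b^q) := by
        gcongr
        rcases le_total a b with hab | hab
        · rw [sup_eq_right.2 hab]; exact le_add_self
        · rw [sup_eq_left.2 hab]; exact le_self_add

/-- a.e. differentiability of a locally Lipschitz function on a nice subset. -/
lemma ae_diffAt_of_lipLoc {u : Euc n → ℝ} {Ω : Set (Euc n)} (hu : LipLocOn u Ω)
    (hΩ : IsOpen Ω) {B : Set (Euc n)} (hBcl : closure B ⊆ Ω)
    (hbdd : Bornology.IsBounded B) :
    ∀ᵐ x ∂((volume : Measure (Euc n)).restrict B), DifferentiableAt ℝ u x := by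
  have hKcomp : IsCompact (closure B) :=
    Metric.isCompact_of_isClosed_isBounded isClosed_closure hbdd.closure
  obtain ⟨δ, hδ, hthick⟩ := hKcomp.exists_thickening_subset_open hΩ hBcl
  set U : Set (Euc n) := Metric.thickening (δ/2) (closure B) with hUdef
  have hUopen : IsOpen U := Metric.isOpen_thickening
  have hUN : U ⊆ Metric.cthickening (δ/2) (closure B) := Metric.thickening_subset_cthickening _ _
  have hNΩ : Metric.cthickening (δ/2) (closure B) ⊆ Ω :=
    le_trans (Metric.cthickening_subset_thickening' hδ (by linarith) _) hthick
  have hNcomp : IsCompact (Metric.cthickening (δ/2) (closure B)) := hKcomp.cthickening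
  obtain ⟨K, hK⟩ := hu.lipschitzOnWith_isCompact hΩ hNcomp hNΩ
  have hKU : LipschitzOnWith K u U := hK.mono hUN
  have hBU : B ⊆ U := le_trans subset_closure (Metric.self_subset_thickening (by positivity) _)
  have h1 : ∀ᵐ x ∂((volume : Measure (Euc n)).restrict U), DifferentiableAt ℝ u x := by
    filter_upwards [hKU.ae_differentiableWithinAt hUopen.measurableSet,
      ae_restrict_mem hUopen.measurableSet] with x hdx hxU
    exact hdx.differentiableAt (hUopen.mem_nhds hxU)
  exact ae_restrict_of_ae_restrict_of_subset hBU h1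
set_option maxHeartbeats 2000000 in
/-- Core local estimate on a single good ball. -/
lemma local_estimate
    (ρ : Euc n → Euc n → ℝ) (Ω : Set (Euc n))
    (hΩopen : IsOpen Ω) (hΩbdd : Bornology.IsBounded Ω)
    (hmet : IsMetricOn ρ Ω)
    (h m : Euc n → ℝ) (hh0 : ∀ x, 0 ≤ h x) (hm0 : ∀ x, 0 ≤ m x)
    (hhloc : LocallyIntegrable h volume) (hmloc : LocallyIntegrable m volume)
    (μ ν : Measure (Euc n))
    (hμ : μ = volume.withDensity (fun x => ENNReal.ofReal (h x)))
    (hν : ν = volume.withDensity (fun x => ENNReal.ofReal (m x)))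
    (Qm sQ : Euc n → Matrix (Fin n) (Fin n) ℝ)
    (hQ : ∀ x ∈ Ω, (Qm x).PosSemidef ∧ (sQ x).PosSemidef ∧ sQ x * sQ x = Qm x)
    (p : ℝ) (hp : 1 ≤ p)
    (hmpos : ∀ᵐ x ∂(volume.restrict Ω), 0 < m x)
    (C₃ : ℝ) (hC₃ : 0 < C₃)
    (hC₃ae : ∀ᵐ x ∂(volume.restrict Ω), vQ p Qm x * h x ≤ C₃ * m x)
    (k C₁ : ℝ) (hk : 1 < k) (hC₁ : 0 < C₁) (hH5 : H5Sobolev ρ Ω μ ν sQ p k C₁)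
    (γ Ct T τ : ℝ) (hγ : 0 < γ) (hCt : 0 < Ct) (hT : 1 ≤ T) (hτ0 : 0 < τ) (hτ1 : τ < 1)
    (hH6 : H6Cutoff ρ Ω Qm sQ p γ Ct T τ)
    (x₀ : Euc n) (hx₀ : x₀ ∈ Ω) (r : ℝ) (hr : 0 < r)
    (hcl : closure (MBall ρ Ω x₀ r) ⊆ Ω) :
    ∃ C > (0:ℝ), ∀ u : Euc n → ℝ, LipLocOn u Ω →
      (∫⁻ x in MBall ρ Ω x₀ (τ*r), ENNReal.ofReal (|u x| ^ (k*p)) ∂ν) ^ (1/(k*p))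
        ≤ ENNReal.ofReal C *
          ((∫⁻ x in Ω, ENNReal.ofReal (|u x| ^ p) ∂ν) ^ (1/p)
            + (∫⁻ x in Ω, ENNReal.ofReal (vnorm ((sQ x).mulVec (grad u x)) ^ p) ∂μ) ^ (1/p)) := by
  have hp0 : (0:ℝ) < p := lt_of_lt_of_le one_pos hp
  have hkp1 : (1:ℝ) ≤ k * p := by nlinarith
  have hkp0 : (0:ℝ) < k * p := lt_of_lt_of_le one_pos hkp1
  set B : Set (Euc n) := MBall ρ Ω x₀ r with hBdef
  set Bτ : Set (Euc n) := MBall ρ Ω x₀ (τ*r) with hBτdef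
  have hBopen : IsOpen B := mball_isOpen hΩopen hmet x₀ hx₀
  have hBτopen : IsOpen Bτ := mball_isOpen hΩopen hmet x₀ hx₀
  have hBmeas : MeasurableSet B := hBopen.measurableSet
  have hBτmeas : MeasurableSet Bτ := hBτopen.measurableSet
  have hBΩ : B ⊆ Ω := fun _ hy => hy.1
  have hτB : Bτ ⊆ B := fun y hy => ⟨hy.1, lt_of_lt_of_le hy.2 (by nlinarith)⟩
  have hx₀B : x₀ ∈ B := mball_mem_self hmet hx₀ hr
  have hBbdd : Bornology.IsBounded B := hΩbdd.subset hBΩ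
  have hKcomp : IsCompact (closure B) :=
    Metric.isCompact_of_isClosed_isBounded isClosed_closure hBbdd.closure
  -- finiteness of the measures of B
  have hνB_lt : ν B < ⊤ := by
    have h1 : ν B ≤ ν (closure B) := measure_mono subset_closure
    have h2 : ν (closure B) < ⊤ := by
      rw [hν, withDensity_apply _ measurableSet_closure]
      exact (hmloc.integrableOn_isCompact hKcomp).lintegral_lt_top
    exact lt_of_le_of_lt h1 h2
  have hμB_lt : μ B < ⊤ := by
    have h1 : μ B ≤ μ (closure B) := measure_mono subset_closure
    have h2 : μ (closure B) < ⊤ := by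
      rw [hμ, withDensity_apply _ measurableSet_closure]
      exact (hhloc.integrableOn_isCompact hKcomp).lintegral_lt_top
    exact lt_of_le_of_lt h1 h2
  -- positivity of ν B
  have hvolB : (volume : Measure (Euc n)) B ≠ 0 := hBopen.measure_ne_zero _ ⟨x₀, hx₀B⟩
  have hm_aem : AEMeasurable m ((volume : Measure (Euc n)).restrict B) :=
    hmloc.aestronglyMeasurable.aemeasurable.restrict
  have hh_aem : AEMeasurable h ((volume : Measure (Euc n)).restrict B) :=
    hhloc.aestronglyMeasurable.aemeasurable.restrict
  have hνB_pos : 0 < ν B := by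
    rcases eq_or_lt_of_le (zero_le (a := ν B)) with heq | hlt
    swap
    · exact hlt
    exfalso
    rw [hν, withDensity_apply _ hBmeas] at heq
    have haem : AEMeasurable (fun x => ENNReal.ofReal (m x))
        ((volume : Measure (Euc n)).restrict B) :=
      ENNReal.measurable_ofReal.comp_aemeasurable hm_aem
    have h0 : (fun x => ENNReal.ofReal (m x)) =ᵐ[(volume : Measure (Euc n)).restrict B] 0 :=
      (lintegral_eq_zero_iff' haem).1 heq.symm
    have h1 : ∀ᵐ x ∂((volume : Measure (Euc n)).restrict B), 0 < m x :=
      ae_restrict_of_ae_restrict_of_subset hBΩ hmpos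
    have h2 : ∀ᵐ x ∂((volume : Measure (Euc n)).restrict B), False := by
      filter_upwards [h0, h1] with x hx0 hx1
      rw [Pi.zero_apply, ENNReal.ofReal_eq_zero] at hx0
      linarith
    have h3 : ((volume : Measure (Euc n)).restrict B) Set.univ = 0 := by
      rw [ae_iff] at h2; simpa using h2
    rw [Measure.restrict_apply_univ] at h3
    exact hvolB h3
  -- cutoff function
  obtain ⟨φs, hφs⟩ := hH6 x₀ r hr hcl
  obtain ⟨hφLip0, hφ01, hφτ, -, hφgrad⟩ := hφs 0
  set φ : Euc n → ℝ := φs 0 with hφdef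
  set c₀ : ℝ := Ct * T ^ (0:ℕ) / r ^ γ with hc₀def
  have hrγ : (0:ℝ) < r ^ γ := Real.rpow_pos_of_pos hr γ
  have hc₀pos : 0 < c₀ := by
    rw [hc₀def]; positivity
  set a : ℝ := (ν B).toReal with hadef
  set b : ℝ := (μ B).toReal with hbdef
  have ha : 0 < a := ENNReal.toReal_pos hνB_pos.ne' hνB_lt.ne
  have hb0 : 0 ≤ b := ENNReal.toReal_nonneg
  set e : ℝ := 1/(k*p) with hedef
  have he0 : 0 < e := by rw [hedef]; positivity
  have hip0 : (0:ℝ) < 1/p := by positivity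
  have hip1 : (1:ℝ)/p ≤ 1 := by rw [div_le_one hp0]; exact hp
  set D : ℝ := a ^ e * (C₁ * r * (b⁻¹) ^ (1/p)) with hDdef
  have hD0 : 0 ≤ D := by
    apply mul_nonneg (Real.rpow_nonneg ha.le _)
    apply mul_nonneg (by positivity) (Real.rpow_nonneg (inv_nonneg.2 hb0) _)
  set E' : ℝ := (c₀ ^ p * C₃) ^ (1/p) with hE'def
  have hE'0 : 0 ≤ E' := Real.rpow_nonneg (by positivity) _
  set E : ℝ := max E' 1 with hEdef
  have hE1 : 1 ≤ E := le_max_right _ _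
  have hE0 : 0 ≤ E := by linarith
  refine ⟨2 * D * E + 1, by nlinarith, fun u hu => ?_⟩
  set 𝒜 : ℝ≥0∞ := ∫⁻ x in Ω, ENNReal.ofReal (|u x| ^ p) ∂ν with hAdef
  set ℬ : ℝ≥0∞ := ∫⁻ x in Ω, ENNReal.ofReal (vnorm ((sQ x).mulVec (grad u x)) ^ p) ∂μ
    with hBBdef
  obtain ⟨Kw, M, hM0, hwlip, hwbound, hwLip0⟩ :=
    lip_mul_cutoff hΩopen hu hφLip0 hφ01 (le_trans hφLip0.2.2 hBΩ)
  set w : Euc n → ℝ := fun y => u y * φ y with hwdef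
  set I₁ : ℝ := ∫ y in B, |w y| ^ (k*p) ∂ν with hI₁def
  set I₂ : ℝ := ∫ y in B, vnorm ((sQ y).mulVec (grad w y)) ^ p ∂μ with hI₂def
  have hI₁0 : 0 ≤ I₁ := integral_nonneg fun y => Real.rpow_nonneg (abs_nonneg _) _
  have hI₂0 : 0 ≤ I₂ := integral_nonneg fun y => Real.rpow_nonneg (vnorm_nonneg _) _
  have h5 := hH5 x₀ r hr hcl w hwLip0
  rw [← hBdef, ← hadef, ← hbdef, ← hI₁def, ← hI₂def, ← hedef] at h5
  -- Step 2 : real inequality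
  have hstep2 : I₁ ^ e ≤ D * I₂ ^ (1/p) := by
    have h5' : (a⁻¹) ^ e * I₁ ^ e ≤ C₁ * r * ((b⁻¹) ^ (1/p) * I₂ ^ (1/p)) := by
      rw [← Real.mul_rpow (inv_nonneg.2 ha.le) hI₁0, ← Real.mul_rpow (inv_nonneg.2 hb0) hI₂0]
      exact h5
    calc I₁ ^ e = a ^ e * ((a⁻¹) ^ e * I₁ ^ e) := by
          rw [← mul_assoc, ← Real.mul_rpow ha.le (inv_nonneg.2 ha.le),
            mul_inv_cancel₀ ha.ne', Real.one_rpow, one_mul]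
      _ ≤ a ^ e * (C₁ * r * ((b⁻¹) ^ (1/p) * I₂ ^ (1/p))) :=
          mul_le_mul_of_nonneg_left h5' (Real.rpow_nonneg ha.le e)
      _ = D * I₂ ^ (1/p) := by rw [hDdef]; ring
  -- Step A,B,C : left side
  have hStepA : ∫⁻ x in Bτ, ENNReal.ofReal (|u x| ^ (k*p)) ∂ν
      = ∫⁻ x in Bτ, ENNReal.ofReal (|w x| ^ (k*p)) ∂ν := by
    apply setLIntegral_congr_fun hBτmeas
    intro x hx
    have : φ x = 1 := hφτ x hx
    simp [hwdef, this]
  have hwcont : Continuous w := hwlip.continuous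
  have hInt1 : Integrable (fun y => |w y| ^ (k*p)) (ν.restrict B) := by
    have hmeasf : AEStronglyMeasurable (fun y => |w y| ^ (k*p)) (ν.restrict B) :=
      ((cont_abs_rpow hkp0).comp hwcont).aestronglyMeasurable
    apply Integrable.mono' (g := fun _ => M ^ (k*p))
      (integrableOn_const hνB_lt.ne) hmeasf
    apply ae_of_all
    intro y
    rw [Real.norm_eq_abs, abs_of_nonneg (Real.rpow_nonneg (abs_nonneg _) _)]
    exact Real.rpow_le_rpow (abs_nonneg _) (hwbound y) hkp0.le
  have hStepC : ∫⁻ x in B, ENNReal.ofReal (|w x| ^ (k*p)) ∂ν = ENNReal.ofReal I₁ :=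
    (ofReal_integral_eq_lintegral_ofReal hInt1
      (ae_of_all _ fun y => Real.rpow_nonneg (abs_nonneg _) _)).symm
  have hXle : (∫⁻ x in Bτ, ENNReal.ofReal (|u x| ^ (k*p)) ∂ν) ^ e
      ≤ ENNReal.ofReal D * (ENNReal.ofReal I₂) ^ (1/p) := by
    calc (∫⁻ x in Bτ, ENNReal.ofReal (|u x| ^ (k*p)) ∂ν) ^ e
        = (∫⁻ x in Bτ, ENNReal.ofReal (|w x| ^ (k*p)) ∂ν) ^ e := by rw [hStepA]
      _ ≤ (∫⁻ x in B, ENNReal.ofReal (|w x| ^ (k*p)) ∂ν) ^ e :=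
          ENNReal.rpow_le_rpow (lintegral_mono_set hτB) he0.le
      _ = (ENNReal.ofReal I₁) ^ e := by rw [hStepC]
      _ = ENNReal.ofReal (I₁ ^ e) := ENNReal.ofReal_rpow_of_nonneg hI₁0 he0.le
      _ ≤ ENNReal.ofReal (D * I₂ ^ (1/p)) := ENNReal.ofReal_le_ofReal hstep2
      _ = ENNReal.ofReal D * ENNReal.ofReal (I₂ ^ (1/p)) := ENNReal.ofReal_mul hD0
      _ = ENNReal.ofReal D * (ENNReal.ofReal I₂) ^ (1/p) := by
          rw [ENNReal.ofReal_rpow_of_nonneg hI₂0 hip0.le]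
  -- Step E
  have hStepE : ENNReal.ofReal I₂
      ≤ ∫⁻ y in B, ENNReal.ofReal (vnorm ((sQ y).mulVec (grad w y)) ^ p) ∂μ := by
    by_cases hint : Integrable (fun y => vnorm ((sQ y).mulVec (grad w y)) ^ p) (μ.restrict B)
    · exact le_of_eq (ofReal_integral_eq_lintegral_ofReal hint
        (ae_of_all _ fun y => Real.rpow_nonneg (vnorm_nonneg _) _))
    · rw [hI₂def]
      rw [integral_undef hint]
      simp
  -- withDensity transfers
  have hh_aem' : AEMeasurable (fun x => ENNReal.ofReal (h x))
      ((volume : Measure (Euc n)).restrict B) :=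
    ENNReal.measurable_ofReal.comp_aemeasurable hh_aem
  have hm_aem' : AEMeasurable (fun x => ENNReal.ofReal (m x))
      ((volume : Measure (Euc n)).restrict B) :=
    ENNReal.measurable_ofReal.comp_aemeasurable hm_aem
  have hwdμ : ∀ g : Euc n → ℝ≥0∞, ∫⁻ y in B, g y ∂μ =
      ∫⁻ y in B, ENNReal.ofReal (h y) * g y ∂volume := by
    intro g
    rw [hμ, restrict_withDensity hBmeas,
      lintegral_withDensity_eq_lintegral_mul_non_measurable₀ _ hh_aem'
        (ae_of_all _ fun y => ENNReal.ofReal_lt_top)]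
    rfl
  have hwdν : ∀ g : Euc n → ℝ≥0∞, ∫⁻ y in B, g y ∂ν =
      ∫⁻ y in B, ENNReal.ofReal (m y) * g y ∂volume := by
    intro g
    rw [hν, restrict_withDensity hBmeas,
      lintegral_withDensity_eq_lintegral_mul_non_measurable₀ _ hm_aem'
        (ae_of_all _ fun y => ENNReal.ofReal_lt_top)]
    rfl
  -- a.e. facts
  have hae_u : ∀ᵐ y ∂((volume : Measure (Euc n)).restrict B), DifferentiableAt ℝ u y :=
    ae_diffAt_of_lipLoc hu hΩopen hcl hBbdd
  have hae_φ : ∀ᵐ y ∂((volume : Measure (Euc n)).restrict B), DifferentiableAt ℝ φ y := by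
    obtain ⟨Kφ, hKφ⟩ := hφLip0.1
    exact ae_restrict_of_ae hKφ.ae_differentiableAt
  have hae_g : ∀ᵐ y ∂((volume : Measure (Euc n)).restrict B),
      vnorm ((sQ y).mulVec (grad φ y)) ≤ c₀ * vQ p Qm y ^ (1/p) :=
    ae_restrict_of_ae hφgrad
  have hae_vh : ∀ᵐ y ∂((volume : Measure (Euc n)).restrict B),
      vQ p Qm y * h y ≤ C₃ * m y :=
    ae_restrict_of_ae_restrict_of_subset hBΩ hC₃ae
  set twop : ℝ≥0∞ := (2:ℝ≥0∞) ^ p with h2pdef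
  have h2pne : twop ≠ ⊤ := by
    rw [h2pdef]
    exact ENNReal.rpow_ne_top_of_nonneg hp0.le (by norm_num)
  -- pointwise bound
  have hptwise : ∀ᵐ y ∂((volume : Measure (Euc n)).restrict B),
      ENNReal.ofReal (h y) * ENNReal.ofReal (vnorm ((sQ y).mulVec (grad w y)) ^ p)
        ≤ ENNReal.ofReal (h y) *
            (twop * ENNReal.ofReal (vnorm ((sQ y).mulVec (grad u y)) ^ p))
          + twop * ENNReal.ofReal (c₀ ^ p * C₃ * (|u y| ^ p * m y)) := by
    filter_upwards [hae_u, hae_φ, hae_g, hae_vh, ae_restrict_mem hBmeas]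
      with y hyu hyφ hyg hyvh hyB
    have hyΩ : y ∈ Ω := hBΩ hyB
    have hvQ0 : 0 ≤ vQ p Qm y := vQ_nonneg (hQ y hyΩ).1
    have hs₂0 : 0 ≤ |u y| * (c₀ * vQ p Qm y ^ (1/p)) := by
      apply mul_nonneg (abs_nonneg _)
      exact mul_nonneg hc₀pos.le (Real.rpow_nonneg hvQ0 _)
    have hgw : vnorm ((sQ y).mulVec (grad w y))
        ≤ vnorm ((sQ y).mulVec (grad u y)) + |u y| * (c₀ * vQ p Qm y ^ (1/p)) := by
      have hgrad : grad w y = u y • grad φ y + φ y • grad u y := grad_mul hyu hyφ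
      calc vnorm ((sQ y).mulVec (grad w y))
          = vnorm ((sQ y).mulVec (u y • grad φ y + φ y • grad u y)) := by rw [hgrad]
        _ ≤ |u y| * vnorm ((sQ y).mulVec (grad φ y))
            + |φ y| * vnorm ((sQ y).mulVec (grad u y)) := vnorm_mulVec_combo _ _ _ _ _
        _ ≤ |u y| * (c₀ * vQ p Qm y ^ (1/p)) + 1 * vnorm ((sQ y).mulVec (grad u y)) := by
            apply add_le_add
            · exact mul_le_mul_of_nonneg_left hyg (abs_nonneg _)
            · apply mul_le_mul_of_nonneg_right _ (vnorm_nonneg _)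
              exact abs_le.2 ⟨by linarith [(hφ01 y).1], (hφ01 y).2⟩
        _ = vnorm ((sQ y).mulVec (grad u y)) + |u y| * (c₀ * vQ p Qm y ^ (1/p)) := by ring
    have h1 : ENNReal.ofReal (vnorm ((sQ y).mulVec (grad w y)) ^ p)
        ≤ (ENNReal.ofReal (vnorm ((sQ y).mulVec (grad u y)))
            + ENNReal.ofReal (|u y| * (c₀ * vQ p Qm y ^ (1/p)))) ^ p := by
      rw [← ENNReal.ofReal_rpow_of_nonneg (vnorm_nonneg _) hp0.le]
      apply ENNReal.rpow_le_rpow _ hp0.le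
      rw [← ENNReal.ofReal_add (vnorm_nonneg _) hs₂0]
      exact ENNReal.ofReal_le_ofReal hgw
    have h2 : (ENNReal.ofReal (vnorm ((sQ y).mulVec (grad u y)))
            + ENNReal.ofReal (|u y| * (c₀ * vQ p Qm y ^ (1/p)))) ^ p
        ≤ twop * (ENNReal.ofReal (vnorm ((sQ y).mulVec (grad u y)) ^ p)
            + ENNReal.ofReal ((|u y| * (c₀ * vQ p Qm y ^ (1/p))) ^ p)) := by
      refine le_trans (ennreal_add_rpow_le _ _ hp0.le) ?_
      rw [ENNReal.ofReal_rpow_of_nonneg (vnorm_nonneg _) hp0.le,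
        ENNReal.ofReal_rpow_of_nonneg hs₂0 hp0.le]
    have h3 : ENNReal.ofReal (h y) * ENNReal.ofReal ((|u y| * (c₀ * vQ p Qm y ^ (1/p))) ^ p)
        ≤ ENNReal.ofReal (c₀ ^ p * C₃ * (|u y| ^ p * m y)) := by
      rw [← ENNReal.ofReal_mul (hh0 y)]
      apply ENNReal.ofReal_le_ofReal
      have hs₂p : (|u y| * (c₀ * vQ p Qm y ^ (1/p))) ^ p
          = c₀ ^ p * (|u y| ^ p * vQ p Qm y) := by
        rw [Real.mul_rpow (abs_nonneg _) (mul_nonneg hc₀pos.le (Real.rpow_nonneg hvQ0 _)),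
          Real.mul_rpow hc₀pos.le (Real.rpow_nonneg hvQ0 _),
          ← Real.rpow_mul hvQ0, one_div_mul_cancel hp0.ne', Real.rpow_one]
        ring
      calc h y * (|u y| * (c₀ * vQ p Qm y ^ (1/p))) ^ p
          = c₀ ^ p * (|u y| ^ p * (vQ p Qm y * h y)) := by rw [hs₂p]; ring
        _ ≤ c₀ ^ p * (|u y| ^ p * (C₃ * m y)) := by
            apply mul_le_mul_of_nonneg_left _ (by positivity)
            exact mul_le_mul_of_nonneg_left hyvh (Real.rpow_nonneg (abs_nonneg _) _)
        _ = c₀ ^ p * C₃ * (|u y| ^ p * m y) := by ring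
    calc ENNReal.ofReal (h y) * ENNReal.ofReal (vnorm ((sQ y).mulVec (grad w y)) ^ p)
        ≤ ENNReal.ofReal (h y) *
            (twop * (ENNReal.ofReal (vnorm ((sQ y).mulVec (grad u y)) ^ p)
              + ENNReal.ofReal ((|u y| * (c₀ * vQ p Qm y ^ (1/p))) ^ p))) := by
          exact mul_le_mul_right (le_trans h1 h2) _
      _ = ENNReal.ofReal (h y) *
            (twop * ENNReal.ofReal (vnorm ((sQ y).mulVec (grad u y)) ^ p))
          + twop * (ENNReal.ofReal (h y)
              * ENNReal.ofReal ((|u y| * (c₀ * vQ p Qm y ^ (1/p))) ^ p)) := by ring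
      _ ≤ ENNReal.ofReal (h y) *
            (twop * ENNReal.ofReal (vnorm ((sQ y).mulVec (grad u y)) ^ p))
          + twop * ENNReal.ofReal (c₀ ^ p * C₃ * (|u y| ^ p * m y)) := by
          exact add_le_add le_rfl (mul_le_mul_right h3 _)
  -- measurability of the second term
  have hu_aem : AEMeasurable u ((volume : Measure (Euc n)).restrict B) :=
    ((hu.continuousOn hΩopen).mono hBΩ).aemeasurable hBmeas
  have habs_aem : AEMeasurable (fun y => |u y| ^ p) ((volume : Measure (Euc n)).restrict B) :=
    (cont_abs_rpow hp0).measurable.comp_aemeasurable hu_aem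
  have haem₂ : AEMeasurable
      (fun y => twop * ENNReal.ofReal (c₀ ^ p * C₃ * (|u y| ^ p * m y)))
      ((volume : Measure (Euc n)).restrict B) := by
    apply AEMeasurable.const_mul
    apply ENNReal.measurable_ofReal.comp_aemeasurable
    exact ((habs_aem.mul hm_aem).const_mul _)
  -- Step F : bound the gradient integral
  have hJ₂ : ∫⁻ y in B, ENNReal.ofReal (vnorm ((sQ y).mulVec (grad w y)) ^ p) ∂μ
      ≤ twop * ℬ + twop * ENNReal.ofReal (c₀ ^ p * C₃) * 𝒜 := by
    rw [hwdμ]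
    calc ∫⁻ y in B, ENNReal.ofReal (h y)
            * ENNReal.ofReal (vnorm ((sQ y).mulVec (grad w y)) ^ p) ∂volume
        ≤ ∫⁻ y in B, (ENNReal.ofReal (h y) *
            (twop * ENNReal.ofReal (vnorm ((sQ y).mulVec (grad u y)) ^ p))
          + twop * ENNReal.ofReal (c₀ ^ p * C₃ * (|u y| ^ p * m y))) ∂volume :=
          lintegral_mono_ae hptwise
      _ = (∫⁻ y in B, ENNReal.ofReal (h y) *
            (twop * ENNReal.ofReal (vnorm ((sQ y).mulVec (grad u y)) ^ p)) ∂volume)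
          + ∫⁻ y in B, twop * ENNReal.ofReal (c₀ ^ p * C₃ * (|u y| ^ p * m y)) ∂volume :=
          lintegral_add_right' _ haem₂
      _ ≤ twop * ℬ + twop * ENNReal.ofReal (c₀ ^ p * C₃) * 𝒜 := by
          apply add_le_add
          · rw [← hwdμ, lintegral_const_mul' _ _ h2pne]
            exact mul_le_mul_right (lintegral_mono_set hBΩ) _
          · rw [lintegral_const_mul' _ _ h2pne]
            have heq : ∫⁻ y in B, ENNReal.ofReal (c₀ ^ p * C₃ * (|u y| ^ p * m y)) ∂volume
                = ENNReal.ofReal (c₀ ^ p * C₃)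
                  * ∫⁻ y in B, ENNReal.ofReal (m y) * ENNReal.ofReal (|u y| ^ p) ∂volume := by
              rw [← lintegral_const_mul' _ _ ENNReal.ofReal_ne_top]
              apply lintegral_congr
              intro y
              rw [ENNReal.ofReal_mul (mul_nonneg (Real.rpow_nonneg hc₀pos.le _) hC₃.le),
                ENNReal.ofReal_mul (Real.rpow_nonneg (abs_nonneg _) _),
                mul_comm (ENNReal.ofReal (|u y| ^ p)) (ENNReal.ofReal (m y))]
            rw [heq, ← hwdν, mul_assoc]
            exact mul_le_mul_right (mul_le_mul_right
              (lintegral_mono_set hBΩ) _) _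
  -- final assembly
  have h2p1p : (twop : ℝ≥0∞) ^ (1/p) = 2 := by
    rw [h2pdef, ← ENNReal.rpow_mul, mul_one_div_cancel hp0.ne', ENNReal.rpow_one]
  calc (∫⁻ x in Bτ, ENNReal.ofReal (|u x| ^ (k*p)) ∂ν) ^ e
      ≤ ENNReal.ofReal D * (ENNReal.ofReal I₂) ^ (1/p) := hXle
    _ ≤ ENNReal.ofReal D * (twop * ℬ + twop * ENNReal.ofReal (c₀ ^ p * C₃) * 𝒜) ^ (1/p) := by
        apply mul_le_mul_right
        exact ENNReal.rpow_le_rpow (le_trans hStepE hJ₂) hip0.le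
    _ ≤ ENNReal.ofReal D * ((twop * ℬ) ^ (1/p)
          + (twop * ENNReal.ofReal (c₀ ^ p * C₃) * 𝒜) ^ (1/p)) := by
        apply mul_le_mul_right
        exact ENNReal.rpow_add_le_add_rpow _ _ hip0.le hip1
    _ = ENNReal.ofReal D * (2 * ℬ ^ (1/p) + 2 * (ENNReal.ofReal E' * 𝒜 ^ (1/p))) := by
        rw [ENNReal.mul_rpow_of_nonneg _ _ hip0.le, ENNReal.mul_rpow_of_nonneg _ _ hip0.le,
          ENNReal.mul_rpow_of_nonneg _ _ hip0.le, h2p1p,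
          ENNReal.ofReal_rpow_of_nonneg (by positivity) hip0.le, ← hE'def, mul_assoc]
    _ ≤ ENNReal.ofReal D * (2 * (ENNReal.ofReal E * ℬ ^ (1/p))
          + 2 * (ENNReal.ofReal E * 𝒜 ^ (1/p))) := by
        apply mul_le_mul_right
        apply add_le_add
        · apply mul_le_mul_right
          exact le_mul_of_one_le_left zero_le (ENNReal.one_le_ofReal.2 hE1)
        · apply mul_le_mul_right
          exact mul_le_mul_left (ENNReal.ofReal_le_ofReal (le_max_left _ _)) _
    _ = (ENNReal.ofReal D * (2 * ENNReal.ofReal E)) * (𝒜 ^ (1/p) + ℬ ^ (1/p)) := by ring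
    _ ≤ ENNReal.ofReal (2 * D * E + 1) * (𝒜 ^ (1/p) + ℬ ^ (1/p)) := by
        apply mul_le_mul_left
        have h2E : (2:ℝ≥0∞) * ENNReal.ofReal E = ENNReal.ofReal (2 * E) := by
          rw [ENNReal.ofReal_mul (by norm_num : (0:ℝ) ≤ 2)]
          norm_num
        rw [h2E, ← ENNReal.ofReal_mul hD0]
        exact ENNReal.ofReal_le_ofReal (by nlinarith)
lemma lintegral_biUnion_finset_le {α : Type*} [MeasurableSpace α] {ι : Type*} (t : Finset ι) (s : ι → Set α)
    (f : α → ℝ≥0∞) (ν : Measure α) :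
    ∫⁻ x in ⋃ i ∈ t, s i, f x ∂ν ≤ ∑ i ∈ t, ∫⁻ x in s i, f x ∂ν := by
  classical
  induction t using Finset.induction_on with
  | empty => simp
  | insert a t' hnotmem ih =>
    rw [Finset.set_biUnion_insert, Finset.sum_insert hnotmem]
    exact le_trans (lintegral_union_le _ _ _) (add_le_add le_rfl ih)

lemma rpow_finset_sum_le {ι : Type*} (t : Finset ι) (f : ι → ℝ≥0∞) {e : ℝ}
    (he0 : 0 < e) (he1 : e ≤ 1) :
    (∑ i ∈ t, f i) ^ e ≤ ∑ i ∈ t, (f i) ^ e := by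
  classical
  induction t using Finset.induction_on with
  | empty => simp [ENNReal.zero_rpow_of_pos he0]
  | insert a t' hnotmem ih =>
    rw [Finset.sum_insert hnotmem, Finset.sum_insert hnotmem]
    exact le_trans (ENNReal.rpow_add_le_add_rpow _ _ he0.le he1) (add_le_add le_rfl ih)
end Helpers

/-- global Sobolev-type estimate on compactly contained open subsets. -/
theorem global_sobolev_no_gain
    (ρ : Euc n → Euc n → ℝ) (Ω : Set (Euc n))
    (hΩopen : IsOpen Ω) (hΩconn : IsConnected Ω) (hΩbdd : Bornology.IsBounded Ω)
    (hmet : IsMetricOn ρ Ω)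
    (h m : Euc n → ℝ) (hh0 : ∀ x, 0 ≤ h x) (hm0 : ∀ x, 0 ≤ m x)
    (hhloc : LocallyIntegrable h volume) (hmloc : LocallyIntegrable m volume)
    (μ ν : Measure (Euc n))
    (hμ : μ = volume.withDensity (fun x => ENNReal.ofReal (h x)))
    (hν : ν = volume.withDensity (fun x => ENNReal.ofReal (m x)))
    (Qm sQ : Euc n → Matrix (Fin n) (Fin n) ℝ)
    (hQ : ∀ x ∈ Ω, (Qm x).PosSemidef ∧ (sQ x).PosSemidef ∧ sQ x * sQ x = Qm x)
    (p : ℝ) (hp : 1 ≤ p)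
    (hvloc : ∀ K : Set (Euc n), IsCompact K → K ⊆ Ω →
      (∫⁻ x in K, ENNReal.ofReal (vQ p Qm x) ∂μ) < ⊤)
    -- (H2)
    (Aμ Aν : ℝ≥0∞) (hdoubμ : DoublingOn ρ Ω μ Aμ) (hdoubν : DoublingOn ρ Ω ν Aν)
    (Crev : ℝ) (hCrev : 0 < Crev) (hrev : RevDoublingOn ρ Ω μ Crev)
    -- (H3)
    (habs : μ ≪ ν)
    (hmpos : ∀ᵐ x ∂(volume.restrict Ω), 0 < m x)
    (hvh : ∃ C > (0:ℝ), ∀ᵐ x ∂(volume.restrict Ω), vQ p Qm x * h x ≤ C * m x)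
    -- (H5)
    (k C₁ : ℝ) (hk : 1 < k) (hC₁ : 0 < C₁) (hH5 : H5Sobolev ρ Ω μ ν sQ p k C₁)
    -- (H6)
    (γ Ct T τ : ℝ) (hγ : 0 < γ) (hCt : 0 < Ct) (hT : 1 ≤ T) (hτ0 : 0 < τ) (hτ1 : τ < 1)
    (hH6 : H6Cutoff ρ Ω Qm sQ p γ Ct T τ)
    (Ω₀ : Set (Euc n)) (hΩ₀open : IsOpen Ω₀) (hΩ₀cl : IsCompact (closure Ω₀))
    (hΩ₀Ω : closure Ω₀ ⊆ Ω) :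
    ∃ C > (0:ℝ), ∀ u : Euc n → ℝ, LipLocOn u Ω →
      (∫⁻ x in Ω₀, ENNReal.ofReal (|u x| ^ (k*p)) ∂ν) ^ (1/(k*p))
        ≤ ENNReal.ofReal C *
          ((∫⁻ x in Ω, ENNReal.ofReal (|u x| ^ p) ∂ν) ^ (1/p)
            + (∫⁻ x in Ω, ENNReal.ofReal (vnorm ((sQ x).mulVec (grad u x)) ^ p) ∂μ) ^ (1/p)) := by
  obtain ⟨C₃, hC₃, hC₃ae⟩ := hvh
  have hkp0 : (0:ℝ) < k * p := by nlinarith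
  have he0 : (0:ℝ) < 1/(k*p) := by positivity
  have he1 : (1:ℝ)/(k*p) ≤ 1 := by rw [div_le_one hkp0]; nlinarith
  have hchoice : ∀ z : closure Ω₀, ∃ r > (0:ℝ), closure (MBall ρ Ω (z:Euc n) r) ⊆ Ω :=
    fun z => exists_good_radius hΩopen hmet (hΩ₀Ω z.2)
  choose rad hrad hradcl using hchoice
  have hloc : ∀ z : closure Ω₀, ∃ C > (0:ℝ), ∀ u : Euc n → ℝ, LipLocOn u Ω →
      (∫⁻ x in MBall ρ Ω (z:Euc n) (τ * rad z), ENNReal.ofReal (|u x| ^ (k*p)) ∂ν) ^ (1/(k*p))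
        ≤ ENNReal.ofReal C *
          ((∫⁻ x in Ω, ENNReal.ofReal (|u x| ^ p) ∂ν) ^ (1/p)
            + (∫⁻ x in Ω, ENNReal.ofReal (vnorm ((sQ x).mulVec (grad u x)) ^ p) ∂μ) ^ (1/p)) :=
    fun z => local_estimate ρ Ω hΩopen hΩbdd hmet h m hh0 hm0 hhloc hmloc μ ν hμ hν Qm sQ hQ
      p hp hmpos C₃ hC₃ hC₃ae k C₁ hk hC₁ hH5 γ Ct T τ hγ hCt hT hτ0 hτ1 hH6
      (z:Euc n) (hΩ₀Ω z.2) (rad z) (hrad z) (hradcl z)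
  choose Cl hClpos hCl using hloc
  have hcov : closure Ω₀ ⊆ ⋃ z : closure Ω₀, MBall ρ Ω (z:Euc n) (τ * rad z) := by
    intro y hy
    exact Set.mem_iUnion.2 ⟨⟨y, hy⟩, mball_mem_self hmet (hΩ₀Ω hy)
      (mul_pos hτ0 (hrad ⟨y, hy⟩))⟩
  obtain ⟨t, ht⟩ := hΩ₀cl.elim_finite_subcover
    (fun z : closure Ω₀ => MBall ρ Ω (z:Euc n) (τ * rad z))
    (fun z => mball_isOpen hΩopen hmet _ (hΩ₀Ω z.2)) hcov
  have hsum0 : 0 ≤ ∑ i ∈ t, Cl i := Finset.sum_nonneg fun i _ => (hClpos i).le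
  refine ⟨(∑ i ∈ t, Cl i) + 1, by linarith, fun u hu => ?_⟩
  calc (∫⁻ x in Ω₀, ENNReal.ofReal (|u x| ^ (k*p)) ∂ν) ^ (1/(k*p))
      ≤ (∫⁻ x in ⋃ i ∈ t, MBall ρ Ω (i:Euc n) (τ * rad i),
          ENNReal.ofReal (|u x| ^ (k*p)) ∂ν) ^ (1/(k*p)) :=
        ENNReal.rpow_le_rpow
          (lintegral_mono_set (subset_trans subset_closure ht)) he0.le
    _ ≤ (∑ i ∈ t, ∫⁻ x in MBall ρ Ω (i:Euc n) (τ * rad i),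
          ENNReal.ofReal (|u x| ^ (k*p)) ∂ν) ^ (1/(k*p)) :=
        ENNReal.rpow_le_rpow (lintegral_biUnion_finset_le _ _ _ _) he0.le
    _ ≤ ∑ i ∈ t, (∫⁻ x in MBall ρ Ω (i:Euc n) (τ * rad i),
          ENNReal.ofReal (|u x| ^ (k*p)) ∂ν) ^ (1/(k*p)) :=
        rpow_finset_sum_le _ _ he0 he1
    _ ≤ ∑ i ∈ t, ENNReal.ofReal (Cl i) *
          ((∫⁻ x in Ω, ENNReal.ofReal (|u x| ^ p) ∂ν) ^ (1/p)
            + (∫⁻ x in Ω, ENNReal.ofReal (vnorm ((sQ x).mulVec (grad u x)) ^ p) ∂μ) ^ (1/p)) :=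
        Finset.sum_le_sum fun i _ => hCl i u hu
    _ = ENNReal.ofReal (∑ i ∈ t, Cl i) *
          ((∫⁻ x in Ω, ENNReal.ofReal (|u x| ^ p) ∂ν) ^ (1/p)
            + (∫⁻ x in Ω, ENNReal.ofReal (vnorm ((sQ x).mulVec (grad u x)) ^ p) ∂μ) ^ (1/p)) := by
        rw [← Finset.sum_mul, ENNReal.ofReal_sum_of_nonneg (fun i _ => (hClpos i).le)]
    _ ≤ ENNReal.ofReal ((∑ i ∈ t, Cl i) + 1) *
          ((∫⁻ x in Ω, ENNReal.ofReal (|u x| ^ p) ∂ν) ^ (1/p)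
            + (∫⁻ x in Ω, ENNReal.ofReal (vnorm ((sQ x).mulVec (grad u x)) ^ p) ∂μ) ^ (1/p)) :=
        mul_le_mul_left (ENNReal.ofReal_le_ofReal (by linarith)) _

end
end

section
/- Let Φ : (0,∞) → (0,∞) be a continuous nondecreasing function with lim_{r→0⁺} Φ(r) = 0 (set Φ(0) = 0), let C > 0 be such that C⁻¹ belongs to the image of Φ, and let k, p > 1. Define Φ⁻¹(t) = min{r ≥ 0 : Φ(r) = t}. Then the series Σ_{j=0}^∞ k^{−j} log Φ⁻¹(1/(C k^{(p−1)j})) converges if and only if ∫₀^R Φ(r)^{1/(p−1)} / r dr converges for some R > 0. Moreover, in this case, if R₀ > 0 satisfies Φ(R₀) = C⁻¹, then C^{−1/(p−1)} ( −((k−1)/k) Σ_{j=0}^∞ k^{−j} log Φ⁻¹(1/(C k^{(p−1)j})) + log R₀ ) ≤ ∫₀^{R₀} Φ(r)^{1/(p−1)}/r dr ≤ C^{−1/(p−1)} ( −(k−1) Σ_{j=0}^∞ k^{−j} log Φ⁻¹(1/(C k^{(p−1)j})) + k log R₀ ). -/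
open MeasureTheory Set Filter Topology

noncomputable section

/-- `Φ⁻¹(t) = min{r ≥ 0 | Φ(r) = t}`, where `Φ` is extended by `Φ(0) = 0`. -/
def PhiInvAux (Φ : ℝ → ℝ) (t : ℝ) : ℝ :=
  sInf {r : ℝ | 0 ≤ r ∧ (if r = 0 then 0 else Φ r) = t}


lemma phiInvAux_spec (Φ : ℝ → ℝ)
    (hΦpos : ∀ r : ℝ, 0 < r → 0 < Φ r)
    (hΦmono : MonotoneOn Φ (Ioi (0:ℝ)))
    (hΦcont : ContinuousOn Φ (Ioi (0:ℝ)))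
    (hΦlim : Tendsto Φ (𝓝[>] (0:ℝ)) (𝓝 0))
    {b t : ℝ} (hb : 0 < b) (htb : t ≤ Φ b) (ht0 : 0 < t) :
    0 < PhiInvAux Φ t ∧ Φ (PhiInvAux Φ t) = t ∧
      ∀ x, 0 < x → Φ x = t → PhiInvAux Φ t ≤ x := by
  obtain ⟨u, hu, husub⟩ := mem_nhdsGT_iff_exists_Ioo_subset.1
    (hΦlim.eventually_lt_const ht0)
  simp only [mem_Ioi] at hu
  have hsmall : ∀ s ∈ Ioo (0:ℝ) u, Φ s < t := fun s hs => husub hs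
  -- construct a root via IVT
  set a : ℝ := min (u/2) b with ha
  have ha0 : 0 < a := lt_min (by linarith) hb
  have hab : a ≤ b := min_le_right _ _
  have hau : a < u := lt_of_le_of_lt (min_le_left _ _) (by linarith)
  have hΦa : Φ a < t := hsmall a ⟨ha0, hau⟩
  have hIcc : Icc a b ⊆ Ioi (0:ℝ) := fun x hx => lt_of_lt_of_le ha0 hx.1
  obtain ⟨x, hxmem, hΦx⟩ := intermediate_value_Icc hab (hΦcont.mono hIcc)
    ⟨hΦa.le, htb⟩
  have hx0 : 0 < x := lt_of_lt_of_le ha0 hxmem.1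
  set S : Set ℝ := {r : ℝ | 0 ≤ r ∧ (if r = 0 then 0 else Φ r) = t} with hS
  have hxS : x ∈ S := ⟨hx0.le, by rw [if_neg hx0.ne']; exact hΦx⟩
  have hSu : S ⊆ Ici u := by
    intro s hs
    obtain ⟨hs0, hseq⟩ := hs
    rcases eq_or_lt_of_le hs0 with h | h
    · rw [if_pos h.symm] at hseq; exact absurd hseq.symm ht0.ne'
    · rw [if_neg h.ne'] at hseq
      by_contra hlt
      exact absurd hseq (ne_of_lt (hsmall s ⟨h, lt_of_not_ge hlt⟩))
  have hSeq : S = Ici u ∩ Φ ⁻¹' {t} := by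
    ext s
    constructor
    · intro hs
      refine ⟨hSu hs, ?_⟩
      have h0 : 0 < s := lt_of_lt_of_le hu (hSu hs)
      have := hs.2; rw [if_neg h0.ne'] at this; exact this
    · rintro ⟨h1, h2⟩
      have h0 : 0 < s := lt_of_lt_of_le hu h1
      exact ⟨h0.le, by rw [if_neg h0.ne']; exact h2⟩
  have hclosed : IsClosed S := by
    rw [hSeq]
    exact (hΦcont.mono (fun y hy => lt_of_lt_of_le hu hy)).preimage_isClosed_of_isClosed
      isClosed_Ici isClosed_singleton
  have hbdd : BddBelow S := ⟨u, fun s hs => hSu hs⟩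
  have hmem : sInf S ∈ S := hclosed.csInf_mem ⟨x, hxS⟩ hbdd
  have h0 : 0 < sInf S := lt_of_lt_of_le hu (hSu hmem)
  refine ⟨h0, ?_, ?_⟩
  · have := hmem.2; rwa [if_neg h0.ne'] at this
  · intro y hy hΦy
    exact csInf_le hbdd ⟨hy.le, by rw [if_neg hy.ne']; exact hΦy⟩

lemma piece_bounds (Φ : ℝ → ℝ)
    (hΦpos : ∀ r : ℝ, 0 < r → 0 < Φ r)
    (hΦcont : ContinuousOn Φ (Ioi (0:ℝ)))
    {e a b m M : ℝ} (he : 0 < e) (ha : 0 < a) (hab : a ≤ b) (hm : 0 ≤ m)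
    (hlo : ∀ r ∈ Ioc a b, m ≤ Φ r) (hhi : ∀ r ∈ Ioc a b, Φ r ≤ M) :
    IntegrableOn (fun r => Φ r ^ e / r) (Ioc a b) volume ∧
    m ^ e * (Real.log b - Real.log a) ≤ (∫ r in Ioc a b, Φ r ^ e / r) ∧
    (∫ r in Ioc a b, Φ r ^ e / r) ≤ M ^ e * (Real.log b - Real.log a) := by
  have hb : 0 < b := lt_of_lt_of_le ha hab
  have hIcc : Icc a b ⊆ Ioi (0:ℝ) := fun x hx => lt_of_lt_of_le ha hx.1
  have hgc : ContinuousOn (fun r => Φ r ^ e / r) (Icc a b) := by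
    refine ContinuousOn.div ?_ continuousOn_id (fun x hx => (hIcc hx).ne')
    exact (hΦcont.mono hIcc).rpow_const (fun x hx => Or.inl (hΦpos x (hIcc hx)).ne')
  have hint : IntegrableOn (fun r => Φ r ^ e / r) (Ioc a b) volume :=
    (hgc.integrableOn_Icc).mono_set Ioc_subset_Icc_self
  have hinv : (∫ r in Ioc a b, r⁻¹) = Real.log b - Real.log a := by
    rw [← intervalIntegral.integral_of_le hab, integral_inv_of_pos ha hb,
      Real.log_div hb.ne' ha.ne']
  have hconst : ∀ q : ℝ, (∫ r in Ioc a b, q / r) = q * (Real.log b - Real.log a) := by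
    intro q
    simp_rw [div_eq_mul_inv]
    rw [integral_const_mul, hinv]
  have hcint : ∀ q : ℝ, IntegrableOn (fun r => q / r) (Ioc a b) volume := by
    intro q
    refine (ContinuousOn.integrableOn_Icc ?_).mono_set Ioc_subset_Icc_self
    exact continuousOn_const.div continuousOn_id (fun x hx => (hIcc hx).ne')
  refine ⟨hint, ?_, ?_⟩
  · rw [← hconst]
    refine setIntegral_mono_on (hcint _) hint measurableSet_Ioc ?_
    intro x hx
    have hx0 : 0 < x := lt_of_lt_of_le ha hx.1.le
    exact div_le_div_of_nonneg_right (Real.rpow_le_rpow hm (hlo x hx) he.le) hx0.le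
  · rw [← hconst]
    refine setIntegral_mono_on hint (hcint _) measurableSet_Ioc ?_
    intro x hx
    have hx0 : 0 < x := lt_of_lt_of_le ha hx.1.le
    exact div_le_div_of_nonneg_right
      (Real.rpow_le_rpow (hΦpos x hx0).le (hhi x hx) he.le) hx0.le


def tA (C k p : ℝ) (j : ℕ) : ℝ := 1 / (C * k ^ ((p-1) * (j:ℝ)))

def rA (Φ : ℝ → ℝ) (C k p : ℝ) (j : ℕ) : ℝ := PhiInvAux Φ (tA C k p j)

theorem core (Φ : ℝ → ℝ)
    (hΦpos : ∀ r : ℝ, 0 < r → 0 < Φ r)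
    (hΦmono : MonotoneOn Φ (Ioi (0:ℝ)))
    (hΦcont : ContinuousOn Φ (Ioi (0:ℝ)))
    (hΦlim : Tendsto Φ (𝓝[>] (0:ℝ)) (𝓝 0))
    (C : ℝ) (hC : 0 < C) (k p : ℝ) (hk : 1 < k) (hp : 1 < p)
    (b0 : ℝ) (hb0 : 0 < b0) (hΦb0 : Φ b0 = C⁻¹) :
    (∀ R₀ : ℝ, 0 < R₀ → Φ R₀ = C⁻¹ →
      (Summable fun j : ℕ => (k ^ j)⁻¹ * Real.log (rA Φ C k p j)) →
      IntegrableOn (fun x => Φ x ^ (1/(p-1)) / x) (Ioc (0:ℝ) R₀) volume ∧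
      (C ^ (1/(p-1)))⁻¹ *
          (-(((k-1)/k) * ∑' j : ℕ, (k ^ j)⁻¹ * Real.log (rA Φ C k p j)) + Real.log R₀)
        ≤ (∫ x in Ioc (0:ℝ) R₀, Φ x ^ (1/(p-1)) / x) ∧
      (∫ x in Ioc (0:ℝ) R₀, Φ x ^ (1/(p-1)) / x)
        ≤ (C ^ (1/(p-1)))⁻¹ *
            (-((k-1) * ∑' j : ℕ, (k ^ j)⁻¹ * Real.log (rA Φ C k p j)) + k * Real.log R₀)) ∧
    (∀ R : ℝ, 0 < R →
      IntegrableOn (fun x => Φ x ^ (1/(p-1)) / x) (Ioc (0:ℝ) R) volume →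
      Summable fun j : ℕ => (k ^ j)⁻¹ * Real.log (rA Φ C k p j)) := by
  have hk0 : (0:ℝ) < k := by linarith
  have hk1 : (1:ℝ) ≤ k := hk.le
  have hkm1 : (0:ℝ) < k - 1 := by linarith
  have hp1 : (0:ℝ) < p - 1 := by linarith
  have he : (0:ℝ) < 1/(p-1) := by positivity
  have hCi : (0:ℝ) < C⁻¹ := by positivity
  set τ := tA C k p with hτdef
  set ρ := rA Φ C k p with hρdef
  set g : ℝ → ℝ := fun x => Φ x ^ (1/(p-1)) / x with hgdef
  set c : ℝ := (C ^ (1/(p-1)))⁻¹ with hcdef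
  set A : ℕ → ℝ := fun j : ℕ => (k ^ j)⁻¹ * Real.log (ρ j) with hA
  set T : ℕ → ℝ := fun j : ℕ => (k ^ j)⁻¹ * (Real.log (ρ j) - Real.log (ρ (j+1)))
    with hT
  have hcpos : (0:ℝ) < c := by rw [hcdef]; positivity
  -- facts about τ
  have htpos : ∀ j, 0 < τ j := by
    intro j; rw [hτdef]; unfold tA
    have := Real.rpow_pos_of_pos hk0 ((p-1) * (j:ℝ)); positivity
  have htle : ∀ j, τ j ≤ C⁻¹ := by
    intro j; rw [hτdef]; unfold tA
    have h1 : (1:ℝ) ≤ k ^ ((p-1)*(j:ℝ)) := Real.one_le_rpow hk1 (by positivity)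
    rw [one_div, mul_inv]
    exact mul_le_of_le_one_right hCi.le (inv_le_one_of_one_le₀ h1)
  have htanti : ∀ j, τ (j+1) < τ j := by
    intro j; rw [hτdef]; unfold tA
    have h1 : k ^ ((p-1)*(j:ℝ)) < k ^ ((p-1)*((j:ℝ)+1)) := by
      apply (Real.rpow_lt_rpow_left_iff hk).2; nlinarith
    have h2 : (0:ℝ) < k ^ ((p-1)*(j:ℝ)) := Real.rpow_pos_of_pos hk0 _
    rw [one_div, one_div]
    apply inv_strictAnti₀ (by positivity)
    have : ((j:ℕ)+1 : ℝ) = ((j+1 : ℕ) : ℝ) := by push_cast; ring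
    rw [← this]
    nlinarith
  have ht0 : τ 0 = C⁻¹ := by
    rw [hτdef]; unfold tA
    norm_num
  have htlim : Tendsto τ atTop (𝓝 0) := by
    rw [hτdef]
    have h1 : Tendsto (fun x : ℝ => k ^ x) atTop atTop := by
      simp_rw [Real.rpow_def_of_pos hk0]
      exact Real.tendsto_exp_atTop.comp (tendsto_id.const_mul_atTop (Real.log_pos hk))
    have h2 : Tendsto (fun j : ℕ => (p-1) * (j:ℝ)) atTop atTop :=
      (tendsto_natCast_atTop_atTop (R := ℝ)).const_mul_atTop hp1
    have h3 : Tendsto (fun j : ℕ => C * k ^ ((p-1) * (j:ℝ))) atTop atTop :=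
      (h1.comp h2).const_mul_atTop hC
    refine h3.inv_tendsto_atTop.congr fun j => ?_
    simp [tA, one_div]
  -- facts about ρ
  have hspec := fun j => phiInvAux_spec Φ hΦpos hΦmono hΦcont hΦlim hb0
    (le_of_le_of_eq (htle j) hΦb0.symm) (htpos j)
  have hρpos : ∀ j, 0 < ρ j := fun j => (hspec j).1
  have hΦρ : ∀ j, Φ (ρ j) = τ j := fun j => (hspec j).2.1
  have hρmin : ∀ j x, 0 < x → Φ x = τ j → ρ j ≤ x := fun j => (hspec j).2.2
  have hρdec : ∀ j, ρ (j+1) < ρ j := by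
    intro j
    by_contra hcon
    push_neg at hcon
    have h := hΦmono (mem_Ioi.2 (hρpos j)) (mem_Ioi.2 (hρpos (j+1))) hcon
    rw [hΦρ, hΦρ] at h
    exact absurd h (not_le.2 (htanti j))
  have hρanti : Antitone ρ := antitone_nat_of_succ_le fun j => (hρdec j).le
  have hρlim : Tendsto ρ atTop (𝓝 0) := by
    have hbdd : BddBelow (range ρ) := ⟨0, by rintro x ⟨j, rfl⟩; exact (hρpos j).le⟩
    have htend := tendsto_atTop_ciInf hρanti hbdd
    have hinfnonneg : 0 ≤ ⨅ j, ρ j := le_ciInf fun j => (hρpos j).le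
    rcases eq_or_lt_of_le hinfnonneg with h | h
    · rwa [← h] at htend
    · exfalso
      have hle : ∀ j, Φ (⨅ i, ρ i) ≤ τ j := fun j => by
        rw [← hΦρ j]
        exact hΦmono (mem_Ioi.2 h) (mem_Ioi.2 (hρpos j)) (ciInf_le hbdd j)
      have := ge_of_tendsto htlim (Eventually.of_forall hle)
      exact absurd this (not_le.2 (hΦpos _ h))
  have hLanti : ∀ i j : ℕ, i ≤ j → Real.log (ρ j) ≤ Real.log (ρ i) :=
    fun i j hij => Real.log_le_log (hρpos j) (hρanti hij)
  have hρ0le : ∀ R₀ : ℝ, 0 < R₀ → Φ R₀ = C⁻¹ → ρ 0 ≤ R₀ := fun R₀ h1 h2 =>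
    hρmin 0 R₀ h1 (by rw [h2, ht0])
  -- rpow computations
  have hceq : ∀ j : ℕ, (τ j) ^ (1/(p-1)) = c * ((k:ℝ) ^ j)⁻¹ := by
    intro j
    rw [hτdef]; unfold tA
    have hKpos : (0:ℝ) < k ^ ((p-1)*(j:ℝ)) := Real.rpow_pos_of_pos hk0 _
    rw [one_div, Real.inv_rpow (by positivity), Real.mul_rpow hC.le hKpos.le,
      ← Real.rpow_mul hk0.le]
    have hexp : ((p-1) * (j:ℝ)) * (1/(p-1)) = (j:ℝ) := by field_simp
    rw [hexp, Real.rpow_natCast, mul_inv, hcdef]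
  have hCe : (C⁻¹ : ℝ) ^ (1/(p-1)) = c := by
    rw [hcdef, Real.inv_rpow hC.le]
  have hT0 : ∀ j, 0 ≤ T j := by
    intro j; rw [hT]
    have h1 := hLanti j (j+1) (Nat.le_succ j)
    have h2 : (0:ℝ) ≤ ((k:ℝ)^j)⁻¹ := by positivity
    simp only
    nlinarith
  have hTmono : Monotone (fun N => ∑ j ∈ Finset.range N, T j) :=
    monotone_nat_of_le_succ fun n => by
      rw [Finset.sum_range_succ]; linarith [hT0 n]
  have hkne : k ≠ 0 := hk0.ne'
  have habel : ∀ N : ℕ, ∑ j ∈ Finset.range N, T j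
      = k * Real.log (ρ 0) - (k-1) * (∑ j ∈ Finset.range N, A j) - k * A N := by
    intro N
    induction N with
    | zero =>
      simp only [Finset.sum_range_zero, hA, pow_zero, inv_one, one_mul, mul_zero, sub_zero]
      ring
    | succ n ih =>
      rw [Finset.sum_range_succ, Finset.sum_range_succ, ih]
      simp only [hT, hA]
      have hkn : ((k:ℝ)^n) ≠ 0 := by positivity
      rw [pow_succ]
      field_simp
      ring
  -- the basic interval bounds
  have hBall : ∀ R₀ : ℝ, 0 < R₀ → Φ R₀ = C⁻¹ → ∀ N : ℕ,
      IntegrableOn g (Ioc (ρ N) R₀) volume ∧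
      c * (k⁻¹ * ∑ j ∈ Finset.range N, T j) + c * (Real.log R₀ - Real.log (ρ 0))
        ≤ (∫ x in Ioc (ρ N) R₀, g x) ∧
      (∫ x in Ioc (ρ N) R₀, g x)
        ≤ c * (∑ j ∈ Finset.range N, T j) + c * (Real.log R₀ - Real.log (ρ 0)) := by
    intro R₀ hR₀ hΦR₀
    have hρ0R : ρ 0 ≤ R₀ := hρ0le R₀ hR₀ hΦR₀
    have hpiece : ∀ j : ℕ,
        IntegrableOn g (Ioc (ρ (j+1)) (ρ j)) volume ∧
        c * (k⁻¹ * T j) ≤ (∫ x in Ioc (ρ (j+1)) (ρ j), g x) ∧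
        (∫ x in Ioc (ρ (j+1)) (ρ j), g x) ≤ c * T j := by
      intro j
      have hlo : ∀ x ∈ Ioc (ρ (j+1)) (ρ j), τ (j+1) ≤ Φ x := fun x hx => by
        rw [← hΦρ (j+1)]
        exact hΦmono (mem_Ioi.2 (hρpos (j+1)))
          (mem_Ioi.2 (lt_trans (hρpos (j+1)) hx.1)) hx.1.le
      have hhi : ∀ x ∈ Ioc (ρ (j+1)) (ρ j), Φ x ≤ τ j := fun x hx => by
        rw [← hΦρ j]
        exact hΦmono (mem_Ioi.2 (lt_trans (hρpos (j+1)) hx.1)) (mem_Ioi.2 (hρpos j)) hx.2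
      obtain ⟨h1, h2, h3⟩ := piece_bounds Φ hΦpos hΦcont he (hρpos (j+1)) (hρdec j).le
        (htpos (j+1)).le hlo hhi
      rw [← hgdef] at h1 h2 h3
      refine ⟨h1, ?_, ?_⟩
      · refine le_trans (le_of_eq ?_) h2
        rw [hceq (j+1), hT]
        simp only
        rw [pow_succ, mul_inv]
        ring
      · refine le_trans h3 (le_of_eq ?_)
        rw [hceq j, hT]
        simp only
        ring
    intro N
    induction N with
    | zero =>
      have hhi : ∀ x ∈ Ioc (ρ 0) R₀, Φ x ≤ C⁻¹ := fun x hx => by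
        rw [← hΦR₀]
        exact hΦmono (mem_Ioi.2 (lt_trans (hρpos 0) hx.1)) (mem_Ioi.2 hR₀) hx.2
      have hlo : ∀ x ∈ Ioc (ρ 0) R₀, C⁻¹ ≤ Φ x := fun x hx => by
        rw [← ht0, ← hΦρ 0]
        exact hΦmono (mem_Ioi.2 (hρpos 0)) (mem_Ioi.2 (lt_trans (hρpos 0) hx.1)) hx.1.le
      obtain ⟨h1, h2, h3⟩ := piece_bounds Φ hΦpos hΦcont he (hρpos 0) hρ0R hCi.le hlo hhi
      rw [← hgdef] at h1 h2 h3
      rw [hCe] at h2 h3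
      refine ⟨h1, ?_, ?_⟩
      · simpa using h2
      · simpa using h3
    | succ n ih =>
      obtain ⟨hi1, hi2, hi3⟩ := ih
      obtain ⟨hq1, hq2, hq3⟩ := hpiece n
      have hsplit : Ioc (ρ (n+1)) R₀ = Ioc (ρ (n+1)) (ρ n) ∪ Ioc (ρ n) R₀ :=
        (Ioc_union_Ioc_eq_Ioc (hρdec n).le (le_trans (hρanti (Nat.zero_le n)) hρ0R)).symm
      have hint : IntegrableOn g (Ioc (ρ (n+1)) R₀) volume := by
        rw [hsplit]; exact hq1.union hi1
      have hIeq : (∫ x in Ioc (ρ (n+1)) R₀, g x)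
          = (∫ x in Ioc (ρ (n+1)) (ρ n), g x) + (∫ x in Ioc (ρ n) R₀, g x) := by
        rw [hsplit]
        exact setIntegral_union (Ioc_disjoint_Ioc_of_le le_rfl) measurableSet_Ioc hq1 hi1
      refine ⟨hint, ?_, ?_⟩
      · rw [hIeq, Finset.sum_range_succ]
        have hexp : c * (k⁻¹ * (∑ j ∈ Finset.range n, T j + T n))
              + c * (Real.log R₀ - Real.log (ρ 0))
            = (c * (k⁻¹ * T n)) + (c * (k⁻¹ * ∑ j ∈ Finset.range n, T j)
              + c * (Real.log R₀ - Real.log (ρ 0))) := by ring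
        rw [hexp]
        exact add_le_add hq2 hi2
      · rw [hIeq, Finset.sum_range_succ]
        have hexp : c * (∑ j ∈ Finset.range n, T j + T n)
              + c * (Real.log R₀ - Real.log (ρ 0))
            = (c * T n) + (c * (∑ j ∈ Finset.range n, T j)
              + c * (Real.log R₀ - Real.log (ρ 0))) := by ring
        rw [hexp]
        exact add_le_add hq3 hi3
  have hgnonneg : ∀ x : ℝ, 0 < x → 0 ≤ g x := fun x hx => by
    rw [hgdef]; exact div_nonneg (Real.rpow_nonneg (hΦpos x hx).le _) hx.le
  have hUnion : ∀ R₀ : ℝ, (⋃ N : ℕ, Ioc (ρ N) R₀) = Ioc (0:ℝ) R₀ := by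
    intro R₀
    ext x
    simp only [mem_iUnion, mem_Ioc]
    constructor
    · rintro ⟨N, h1, h2⟩; exact ⟨lt_trans (hρpos N) h1, h2⟩
    · rintro ⟨h1, h2⟩
      obtain ⟨N, hN⟩ := (hρlim.eventually_lt_const h1).exists
      exact ⟨N, hN, h2⟩
  have hmonoSets : ∀ R₀ : ℝ, Monotone (fun N : ℕ => Ioc (ρ N) R₀) := fun R₀ N M hNM =>
    Ioc_subset_Ioc_left (hρanti hNM)
  have hfwd : ∀ R₀ : ℝ, 0 < R₀ → Φ R₀ = C⁻¹ → Summable A →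
      IntegrableOn g (Ioc (0:ℝ) R₀) volume ∧
      c * (-(((k-1)/k) * ∑' j, A j) + Real.log R₀) ≤ (∫ x in Ioc (0:ℝ) R₀, g x) ∧
      (∫ x in Ioc (0:ℝ) R₀, g x) ≤ c * (-((k-1) * ∑' j, A j) + k * Real.log R₀) := by
    intro R₀ hR₀ hΦR₀ hs
    have hA0 : Tendsto A atTop (𝓝 0) := hs.tendsto_atTop_zero
    have hPA : Tendsto (fun N => ∑ j ∈ Finset.range N, A j) atTop (𝓝 (∑' j, A j)) :=
      hs.hasSum.tendsto_sum_nat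
    have hPT : Tendsto (fun N => ∑ j ∈ Finset.range N, T j) atTop
        (𝓝 (k * Real.log (ρ 0) - (k-1) * (∑' j, A j) - k * 0)) := by
      simp only [habel]
      exact (tendsto_const_nhds.sub (hPA.const_mul _)).sub (hA0.const_mul _)
    rw [mul_zero, sub_zero] at hPT
    have hTsum : Summable T := summable_of_sum_range_le hT0
      (fun n => hTmono.ge_of_tendsto hPT n)
    have hTeq : (∑' j, T j) = k * Real.log (ρ 0) - (k-1) * (∑' j, A j) :=
      tendsto_nhds_unique hTsum.hasSum.tendsto_sum_nat hPT
    have hTub : ∀ N, ∑ j ∈ Finset.range N, T j ≤ ∑' j, T j :=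
      fun N => Summable.sum_le_tsum (Finset.range N) (fun i _ => hT0 i) hTsum
    have hBub : ∀ N, (∫ x in Ioc (ρ N) R₀, g x)
        ≤ c * (∑' j, T j) + c * (Real.log R₀ - Real.log (ρ 0)) := fun N => by
      refine le_trans (hBall R₀ hR₀ hΦR₀ N).2.2 ?_
      have h := mul_le_mul_of_nonneg_left (hTub N) hcpos.le
      linarith
    have hInt : IntegrableOn g (Ioc (0:ℝ) R₀) volume := by
      apply integrableOn_Ioc_of_intervalIntegral_norm_bounded_left
        (fun N => (hBall R₀ hR₀ hΦR₀ N).1) hρlim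
      filter_upwards with N
      have hcongr : (∫ x in Ioc (ρ N) R₀, ‖g x‖) = ∫ x in Ioc (ρ N) R₀, g x := by
        apply setIntegral_congr_fun measurableSet_Ioc
        intro x hx
        exact Real.norm_of_nonneg (hgnonneg x (lt_trans (hρpos N) hx.1))
      rw [hcongr]; exact hBub N
    have hBtend : Tendsto (fun N => ∫ x in Ioc (ρ N) R₀, g x) atTop
        (𝓝 (∫ x in Ioc (0:ℝ) R₀, g x)) := by
      have h := tendsto_setIntegral_of_monotone (fun N : ℕ => measurableSet_Ioc)
        (hmonoSets R₀) (by rw [hUnion R₀]; exact hInt)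
      rwa [hUnion R₀] at h
    refine ⟨hInt, ?_, ?_⟩
    · have hlhs : Tendsto (fun N => c * (k⁻¹ * ∑ j ∈ Finset.range N, T j)
          + c * (Real.log R₀ - Real.log (ρ 0))) atTop
          (𝓝 (c * (k⁻¹ * ∑' j, T j) + c * (Real.log R₀ - Real.log (ρ 0)))) :=
        (((hTsum.hasSum.tendsto_sum_nat).const_mul _).const_mul _).add_const _
      have hle := le_of_tendsto_of_tendsto' hlhs hBtend
        (fun N => (hBall R₀ hR₀ hΦR₀ N).2.1)
      refine le_trans (le_of_eq ?_) hle
      rw [hTeq]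
      field_simp
      ring
    · have hlhs : Tendsto (fun N => c * (∑ j ∈ Finset.range N, T j)
          + c * (Real.log R₀ - Real.log (ρ 0))) atTop
          (𝓝 (c * (∑' j, T j) + c * (Real.log R₀ - Real.log (ρ 0)))) :=
        ((hTsum.hasSum.tendsto_sum_nat).const_mul _).add_const _
      have hle := le_of_tendsto_of_tendsto' hBtend hlhs
        (fun N => (hBall R₀ hR₀ hΦR₀ N).2.2)
      refine le_trans hle ?_
      rw [hTeq]
      have hL0 : Real.log (ρ 0) ≤ Real.log R₀ :=
        Real.log_le_log (hρpos 0) (hρ0le R₀ hR₀ hΦR₀)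
      have h1 : (k * Real.log (ρ 0) - (k-1) * (∑' j, A j)) + (Real.log R₀ - Real.log (ρ 0))
          ≤ -((k-1) * ∑' j, A j) + k * Real.log R₀ := by
        have h2 := mul_le_mul_of_nonneg_left hL0 hkm1.le
        linarith
      calc c * (k * Real.log (ρ 0) - (k-1) * (∑' j, A j))
            + c * (Real.log R₀ - Real.log (ρ 0))
          = c * ((k * Real.log (ρ 0) - (k-1) * (∑' j, A j))
            + (Real.log R₀ - Real.log (ρ 0))) := by ring
        _ ≤ c * (-((k-1) * ∑' j, A j) + k * Real.log R₀) :=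
            mul_le_mul_of_nonneg_left h1 hcpos.le
  have hconv : ∀ R : ℝ, 0 < R → IntegrableOn g (Ioc (0:ℝ) R) volume → Summable A := by
    intro R hR hgint
    set R1 : ℝ := max R (ρ 0) with hR1
    have hRR1 : R ≤ R1 := le_max_left _ _
    have hρ0R1 : ρ 0 ≤ R1 := le_max_right _ _
    have hR1pos : 0 < R1 := lt_of_lt_of_le hR hRR1
    have hIntR1 : IntegrableOn g (Ioc (0:ℝ) R1) volume := by
      have hsplit : Ioc (0:ℝ) R1 = Ioc 0 R ∪ Ioc R R1 :=
        (Ioc_union_Ioc_eq_Ioc hR.le hRR1).symm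
      rw [hsplit]
      refine hgint.union ?_
      have hhi : ∀ x ∈ Ioc R R1, Φ x ≤ Φ R1 := fun x hx =>
        hΦmono (mem_Ioi.2 (lt_trans hR hx.1)) (mem_Ioi.2 hR1pos) hx.2
      have hlo : ∀ x ∈ Ioc R R1, (0:ℝ) ≤ Φ x := fun x hx => (hΦpos x (lt_trans hR hx.1)).le
      have h := (piece_bounds Φ hΦpos hΦcont he hR hRR1 le_rfl hlo hhi).1
      rwa [← hgdef] at h
    have hJ : ∀ N, (∫ x in Ioc (ρ N) (ρ 0), g x) ≤ ∫ x in Ioc (0:ℝ) R1, g x := by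
      intro N
      refine setIntegral_mono_set hIntR1 ?_ ?_
      · refine (ae_restrict_iff' measurableSet_Ioc).2 (Eventually.of_forall ?_)
        intro x hx; exact hgnonneg x hx.1
      · exact HasSubset.Subset.eventuallyLE
          (fun x hx => ⟨lt_trans (hρpos N) hx.1, le_trans hx.2 hρ0R1⟩)
    have hΦρ0 : Φ (ρ 0) = C⁻¹ := by rw [hΦρ 0, ht0]
    have hPTbound : ∀ N, ∑ j ∈ Finset.range N, T j
        ≤ (k * c⁻¹) * ∫ x in Ioc (0:ℝ) R1, g x := by
      intro N
      have h1 := (hBall (ρ 0) (hρpos 0) hΦρ0 N).2.1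
      have h2 : c * (k⁻¹ * ∑ j ∈ Finset.range N, T j) ≤ ∫ x in Ioc (ρ N) (ρ 0), g x := by
        have h0 : Real.log (ρ 0) - Real.log (ρ 0) = 0 := sub_self _
        rw [h0, mul_zero, add_zero] at h1
        exact h1
      have h3 := le_trans h2 (hJ N)
      have h4 := mul_le_mul_of_nonneg_left h3 (by positivity : (0:ℝ) ≤ k * c⁻¹)
      have h5 : (k * c⁻¹) * (c * (k⁻¹ * ∑ j ∈ Finset.range N, T j))
          = ∑ j ∈ Finset.range N, T j := by
        field_simp
      linarith
    have hTsum : Summable T := summable_of_sum_range_le hT0 hPTbound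
    have hTub : ∀ N, ∑ j ∈ Finset.range N, T j ≤ ∑' j, T j :=
      fun N => Summable.sum_le_tsum _ (fun i _ => hT0 i) hTsum
    have hAub : ∀ N, A N ≤ max (Real.log (ρ 0)) 0 := by
      intro N
      rw [hA]; simp only
      rcases le_or_gt (Real.log (ρ N)) 0 with h | h
      · refine le_trans ?_ (le_max_right _ _)
        exact mul_nonpos_iff.2 (Or.inl ⟨by positivity, h⟩)
      · refine le_trans ?_ (le_max_left _ _)
        have h1 : ((k:ℝ)^N)⁻¹ ≤ 1 := inv_le_one_of_one_le₀ (one_le_pow₀ hk1)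
        have h2 := hLanti 0 N (Nat.zero_le N)
        nlinarith
    have hQlow : ∀ N, (k * Real.log (ρ 0) - (∑' j, T j) - k * max (Real.log (ρ 0)) 0) / (k-1)
        ≤ ∑ j ∈ Finset.range N, A j := by
      intro N
      rw [div_le_iff₀ hkm1]
      have h := habel N
      have h2 := hTub N
      have h3 := mul_le_mul_of_nonneg_left (hAub N) hk0.le
      linarith
    have hLbot : Tendsto (fun N => Real.log (ρ N)) atTop atBot :=
      Real.tendsto_log_nhdsGT_zero.comp
        (tendsto_nhdsWithin_of_tendsto_nhds_of_eventually_within _ hρlim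
          (Eventually.of_forall fun n => hρpos n))
    obtain ⟨J0, hJ0⟩ := eventually_atTop.1 (hLbot.eventually (eventually_le_atBot 0))
    have hAnonpos : ∀ n : ℕ, A (J0 + n) ≤ 0 := by
      intro n
      rw [hA]; simp only
      exact mul_nonpos_iff.2 (Or.inl ⟨by positivity, hJ0 (J0+n) (Nat.le_add_right _ _)⟩)
    have hsumshift : ∀ n : ℕ, ∑ i ∈ Finset.range n, A (J0 + i)
        = (∑ j ∈ Finset.range (J0 + n), A j) - ∑ j ∈ Finset.range J0, A j := by
      intro n
      induction n with
      | zero => simp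
      | succ m ih =>
        rw [Finset.sum_range_succ, ih, Nat.add_succ, Finset.sum_range_succ]
        ring
    have hS2 : Summable fun n : ℕ => -(A (J0 + n)) := by
      apply summable_of_sum_range_le (c := (∑ j ∈ Finset.range J0, A j)
        - (k * Real.log (ρ 0) - (∑' j, T j) - k * max (Real.log (ρ 0)) 0) / (k-1))
      · intro n; exact neg_nonneg.2 (hAnonpos n)
      · intro n
        have hns : ∑ i ∈ Finset.range n, -(A (J0 + i))
            = -(∑ i ∈ Finset.range n, A (J0 + i)) := by
          simp
        rw [hns, hsumshift]
        have := hQlow (J0 + n)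
        linarith
    have hS3 : Summable fun n : ℕ => A (n + J0) := by
      have h := hS2.neg
      simp only [neg_neg] at h
      exact h.congr fun n => congrArg A (Nat.add_comm _ _)
    exact (summable_nat_add_iff J0).1 hS3
  exact ⟨fun R₀ h1 h2 hs => hfwd R₀ h1 h2 hs, hconv⟩


/-- the series `Σ k^{-j} log Φ⁻¹(1/(C k^{(p-1)j}))` converges iff
`∫₀ᴿ Φ(r)^{1/(p-1)}/r dr` converges, with two-sided quantitative bounds. -/
theorem series_iff_integral_converges
    (Φ : ℝ → ℝ)
    (hΦpos : ∀ r : ℝ, 0 < r → 0 < Φ r)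
    (hΦmono : MonotoneOn Φ (Ioi (0:ℝ)))
    (hΦcont : ContinuousOn Φ (Ioi (0:ℝ)))
    (hΦlim : Tendsto Φ (𝓝[>] (0:ℝ)) (𝓝 0))
    (C : ℝ) (hC : 0 < C) (hCmem : C⁻¹ ∈ Φ '' (Ioi (0:ℝ)))
    (k p : ℝ) (hk : 1 < k) (hp : 1 < p) :
    ((Summable fun j : ℕ =>
        (k ^ j)⁻¹ * Real.log (PhiInvAux Φ (1 / (C * k ^ ((p-1) * (j:ℝ))))))
      ↔ ∃ R > (0:ℝ),
          IntegrableOn (fun r => Φ r ^ (1/(p-1)) / r) (Ioc (0:ℝ) R) volume) ∧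
    (∀ R₀ : ℝ, 0 < R₀ → Φ R₀ = C⁻¹ →
      (Summable fun j : ℕ =>
        (k ^ j)⁻¹ * Real.log (PhiInvAux Φ (1 / (C * k ^ ((p-1) * (j:ℝ)))))) →
      (C ^ (1/(p-1)))⁻¹ *
          (-(((k-1)/k) * ∑' j : ℕ,
              (k ^ j)⁻¹ * Real.log (PhiInvAux Φ (1 / (C * k ^ ((p-1) * (j:ℝ))))))
            + Real.log R₀)
        ≤ (∫ r in Ioc (0:ℝ) R₀, Φ r ^ (1/(p-1)) / r) ∧
      (∫ r in Ioc (0:ℝ) R₀, Φ r ^ (1/(p-1)) / r)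
        ≤ (C ^ (1/(p-1)))⁻¹ *
            (-((k-1) * ∑' j : ℕ,
                (k ^ j)⁻¹ * Real.log (PhiInvAux Φ (1 / (C * k ^ ((p-1) * (j:ℝ))))))
              + k * Real.log R₀)) := by
  obtain ⟨b0, hb0, hΦb0⟩ := hCmem
  rw [mem_Ioi] at hb0
  obtain ⟨hfwd, hconv⟩ := core Φ hΦpos hΦmono hΦcont hΦlim C hC k p hk hp b0 hb0 hΦb0
  exact ⟨⟨fun hs => ⟨b0, hb0, (hfwd b0 hb0 hΦb0 hs).1⟩,
      fun ⟨R, hR, hint⟩ => hconv R hR hint⟩,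
    fun R₀ hR₀ hΦR₀ hs => ⟨(hfwd R₀ hR₀ hΦR₀ hs).2.1, (hfwd R₀ hR₀ hΦR₀ hs).2.2⟩⟩

end
end
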